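/- Let f:[0,1]→ℝ be piecewise bounded Lipschitz such that v(x) ≠ 0 at every discontinuity point of f, v ∈ BL([0,1]), T ≥ 0, and let μ:[0,T]→M([0,1]) be the unique mild solution of ∂_t μ_t + ∂_x(v μ_t) = f·μ_t with initial value ν₀, i.e. the unique continuous, TV-bounded map satisfying μ_t = P_t ν₀ + ∫_0^t P_{t−s}(f·μ_s) ds. Then μ is a weak solution: for every ψ ∈ C¹([0,1]×[0,T]) with ∂_x ψ(0,t) = ∂_x ψ(1,t) = 0 for all t, ⟨μ_T, ψ(·,T)⟩ − ⟨ν₀, ψ(·,0)⟩ = ∫_0^T ⟨μ_t, ∂_t ψ(·,t) + ∂_x ψ(·,t)·v⟩ dt + ∫_0^T ⟨f·μ_t, ψ(·,t)⟩ dt. -/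

import Mathlib

open MeasureTheory Set Filter
open scoped ENNReal NNReal Topology

noncomputable section

abbrev I01 : Type := Set.Icc (0:ℝ) 1

noncomputable def tvNorm (μ : SignedMeasure I01) : ℝ :=
  (μ.totalVariation Set.univ).toReal

noncomputable def supNorm (φ : I01 → ℝ) : ℝ := ⨆ x : I01, |φ x|

noncomputable def lipConst (φ : I01 → ℝ) : ℝ :=
  sInf {K : ℝ | 0 ≤ K ∧ ∀ x y : I01, |φ x - φ y| ≤ K * dist x y}

noncomputable def blNorm (φ : I01 → ℝ) : ℝ := supNorm φ + lipConst φ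

noncomputable def pairSM (μ : SignedMeasure I01) (φ : I01 → ℝ) : ℝ :=
  ∫ x, φ x ∂μ.toJordanDecomposition.posPart - ∫ x, φ x ∂μ.toJordanDecomposition.negPart

noncomputable def dualBLNorm (μ : SignedMeasure I01) : ℝ :=
  sSup {r : ℝ | ∃ φ : I01 → ℝ, Continuous φ ∧ blNorm φ ≤ 1 ∧ r = |pairSM μ φ|}

noncomputable def Ff (f : I01 → ℝ) (μ : SignedMeasure I01) : SignedMeasure I01 :=
  μ.toJordanDecomposition.posPart.withDensityᵥ f -
    μ.toJordanDecomposition.negPart.withDensityᵥ f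

/-- The stopped flow on `[0,1]` generated by a velocity field `v`: trajectories solve
`ẋ = v(x)` up to the boundary-hitting time `τ` and are frozen afterwards at the boundary
point reached; `τ` is maximal (the trajectory is stopped only where `v` pushes it
strictly out of `[0,1]`). -/
structure StoppedFlow where
  v : I01 → ℝ
  Φ : ℝ → I01 → I01
  τ : I01 → ℝ≥0∞
  init : ∀ y, Φ 0 y = y
  ode : ∀ y, ∀ t : ℝ, 0 ≤ t → ENNReal.ofReal t < τ y →
      HasDerivAt (fun s => (Φ s y : ℝ)) (v (Φ t y)) t
  stopped : ∀ y, ∀ t : ℝ, τ y ≤ ENNReal.ofReal t →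
      (Φ t y : ℝ) = 0 ∨ (Φ t y : ℝ) = 1
  frozen : ∀ y, ∀ s t : ℝ, τ y ≤ ENNReal.ofReal s → s ≤ t → Φ t y = Φ s y
  maximal : ∀ y, τ y ≠ ⊤ →
      (((Φ (τ y).toReal y : ℝ) = 0 ∧ v (Φ (τ y).toReal y) < 0) ∨
       ((Φ (τ y).toReal y : ℝ) = 1 ∧ 0 < v (Φ (τ y).toReal y)))
  cont_t : ∀ y, Continuous fun t => Φ t y
  cont_y : ∀ t : ℝ, 0 ≤ t → Continuous fun y => Φ t y

/-! ### Basic facts about `pairSM` -/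

/-- A bounded measurable function. -/
def BM (φ : I01 → ℝ) : Prop := Measurable φ ∧ ∃ M : ℝ, ∀ x, |φ x| ≤ M

lemma BM.integrable {φ : I01 → ℝ} (h : BM φ) (ρ : Measure I01) [IsFiniteMeasure ρ] :
    Integrable φ ρ := by
  obtain ⟨hm, M, hM⟩ := h
  exact (integrable_const M).mono' hm.aestronglyMeasurable
    (Filter.Eventually.of_forall (fun x => by simpa [Real.norm_eq_abs] using hM x))

lemma BM.const (c : ℝ) : BM (fun _ : I01 => c) :=
  ⟨measurable_const, ⟨|c|, fun _ => le_rfl⟩⟩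

lemma BM.add {φ χ : I01 → ℝ} (hφ : BM φ) (hχ : BM χ) : BM (fun x => φ x + χ x) := by
  obtain ⟨hm, M, hM⟩ := hφ; obtain ⟨hm', M', hM'⟩ := hχ
  exact ⟨hm.add hm', ⟨M + M', fun x => (abs_add_le _ _).trans (add_le_add (hM x) (hM' x))⟩⟩

lemma BM.mul {φ χ : I01 → ℝ} (hφ : BM φ) (hχ : BM χ) : BM (fun x => φ x * χ x) := by
  obtain ⟨hm, M, hM⟩ := hφ; obtain ⟨hm', M', hM'⟩ := hχ
  refine ⟨hm.mul hm', ⟨M * M', fun x => ?_⟩⟩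
  rw [abs_mul]
  have h0 : (0:ℝ) ≤ |φ x| := abs_nonneg _
  have h0' : (0:ℝ) ≤ |χ x| := abs_nonneg _
  exact mul_le_mul (hM x) (hM' x) h0' (h0.trans (hM x))

lemma BM.neg {φ : I01 → ℝ} (hφ : BM φ) : BM (fun x => - φ x) := by
  obtain ⟨hm, M, hM⟩ := hφ
  exact ⟨hm.neg, ⟨M, fun x => by simpa using hM x⟩⟩

lemma BM.smul (c : ℝ) {φ : I01 → ℝ} (hφ : BM φ) : BM (fun x => c * φ x) :=
  (BM.const c).mul hφ

lemma BM.sub {φ χ : I01 → ℝ} (hφ : BM φ) (hχ : BM χ) : BM (fun x => φ x - χ x) := by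
  simpa [sub_eq_add_neg] using hφ.add hχ.neg

/-- Key computational lemma: if `ν = ρ₁ - ρ₂` as signed measures, then pairing with `ν`
is the difference of the integrals. -/
lemma pairSM_eq_of (ν : SignedMeasure I01) (ρ₁ ρ₂ : Measure I01) [IsFiniteMeasure ρ₁]
    [IsFiniteMeasure ρ₂] (h : ν = ρ₁.toSignedMeasure - ρ₂.toSignedMeasure)
    {φ : I01 → ℝ} (hφ : BM φ) :
    pairSM ν φ = ∫ x, φ x ∂ρ₁ - ∫ x, φ x ∂ρ₂ := by
  set ρp := ν.toJordanDecomposition.posPart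
  set ρn := ν.toJordanDecomposition.negPart
  have hν : ρp.toSignedMeasure - ρn.toSignedMeasure = ρ₁.toSignedMeasure - ρ₂.toSignedMeasure := by
    rw [← h]
    conv_rhs => rw [← ν.toSignedMeasure_toJordanDecomposition]
    rfl
  have h2 : (ρp + ρ₂).toSignedMeasure = (ρ₁ + ρn).toSignedMeasure := by
    rw [Measure.toSignedMeasure_add, Measure.toSignedMeasure_add]
    rw [sub_eq_sub_iff_add_eq_add] at hν
    linear_combination (norm := abel_nf) hν
  have h3 : ρp + ρ₂ = ρ₁ + ρn := Measure.toSignedMeasure_eq_toSignedMeasure_iff.mp h2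
  have h4 : ∫ x, φ x ∂ρp + ∫ x, φ x ∂ρ₂ = ∫ x, φ x ∂ρ₁ + ∫ x, φ x ∂ρn := by
    rw [← integral_add_measure (hφ.integrable _) (hφ.integrable _),
      ← integral_add_measure (hφ.integrable _) (hφ.integrable _), h3]
  simp only [pairSM]
  linarith

lemma pairSM_jordan (ν : SignedMeasure I01) :
    ν = ν.toJordanDecomposition.posPart.toSignedMeasure -
      ν.toJordanDecomposition.negPart.toSignedMeasure := by
  conv_lhs => rw [← ν.toSignedMeasure_toJordanDecomposition]
  rfl
lemma pairSM_add (ν : SignedMeasure I01) {φ χ : I01 → ℝ} (hφ : BM φ) (hχ : BM χ) :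
    pairSM ν (fun x => φ x + χ x) = pairSM ν φ + pairSM ν χ := by
  simp only [pairSM]
  rw [integral_add (hφ.integrable _) (hχ.integrable _),
    integral_add (hφ.integrable _) (hχ.integrable _)]
  ring

lemma pairSM_smul (ν : SignedMeasure I01) (c : ℝ) (φ : I01 → ℝ) :
    pairSM ν (fun x => c * φ x) = c * pairSM ν φ := by
  simp only [pairSM]
  rw [integral_const_mul, integral_const_mul]
  ring

lemma pairSM_sub (ν : SignedMeasure I01) {φ χ : I01 → ℝ} (hφ : BM φ) (hχ : BM χ) :
    pairSM ν (fun x => φ x - χ x) = pairSM ν φ - pairSM ν χ := by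
  have := pairSM_add ν hφ hχ.neg
  have h2 := pairSM_smul ν (-1) χ
  simp only [neg_one_mul] at h2
  simp only [sub_eq_add_neg]
  rw [this, h2]

lemma tvNorm_eq (ν : SignedMeasure I01) :
    tvNorm ν = (ν.toJordanDecomposition.posPart Set.univ).toReal +
      (ν.toJordanDecomposition.negPart Set.univ).toReal := by
  rw [tvNorm, SignedMeasure.totalVariation, Measure.add_apply,
    ENNReal.toReal_add (measure_ne_top _ _) (measure_ne_top _ _)]

lemma pairSM_abs_le (ν : SignedMeasure I01) {φ : I01 → ℝ} {M : ℝ}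
    (hb : ∀ x, |φ x| ≤ M) : |pairSM ν φ| ≤ M * tvNorm ν := by
  have h1 : ‖∫ x, φ x ∂ν.toJordanDecomposition.posPart‖ ≤
      M * (ν.toJordanDecomposition.posPart Set.univ).toReal :=
    norm_integral_le_of_norm_le_const (Filter.Eventually.of_forall
      (fun x => by simpa [Real.norm_eq_abs] using hb x))
  have h2 : ‖∫ x, φ x ∂ν.toJordanDecomposition.negPart‖ ≤
      M * (ν.toJordanDecomposition.negPart Set.univ).toReal :=
    norm_integral_le_of_norm_le_const (Filter.Eventually.of_forall
      (fun x => by simpa [Real.norm_eq_abs] using hb x))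
  rw [Real.norm_eq_abs] at h1 h2
  rw [tvNorm_eq]
  calc |pairSM ν φ| ≤ |∫ x, φ x ∂ν.toJordanDecomposition.posPart| +
      |∫ x, φ x ∂ν.toJordanDecomposition.negPart| := abs_sub _ _
  _ ≤ _ := by rw [mul_add]; exact add_le_add h1 h2

lemma pairSM_sub_measure (ν₁ ν₂ : SignedMeasure I01) {φ : I01 → ℝ} (hφ : BM φ) :
    pairSM (ν₁ - ν₂) φ = pairSM ν₁ φ - pairSM ν₂ φ := by
  have h : ν₁ - ν₂ =
      (ν₁.toJordanDecomposition.posPart + ν₂.toJordanDecomposition.negPart).toSignedMeasure -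
      (ν₁.toJordanDecomposition.negPart + ν₂.toJordanDecomposition.posPart).toSignedMeasure := by
    rw [Measure.toSignedMeasure_add, Measure.toSignedMeasure_add]
    conv_lhs => rw [pairSM_jordan ν₁, pairSM_jordan ν₂]
    abel
  rw [pairSM_eq_of _ _ _ h hφ, integral_add_measure (hφ.integrable _) (hφ.integrable _),
    integral_add_measure (hφ.integrable _) (hφ.integrable _)]
  simp only [pairSM]
  ring

lemma signedMeasure_map_eq (ν : SignedMeasure I01) {Φm : I01 → I01} (hΦ : Measurable Φm) :
    ν.map Φm = (ν.toJordanDecomposition.posPart.map Φm).toSignedMeasure -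
      (ν.toJordanDecomposition.negPart.map Φm).toSignedMeasure := by
  ext A hA
  rw [VectorMeasure.map_apply _ hΦ hA, VectorMeasure.sub_apply,
    Measure.toSignedMeasure_apply_measurable hA,
    Measure.toSignedMeasure_apply_measurable hA,
    map_measureReal_apply hΦ hA, map_measureReal_apply hΦ hA]
  conv_lhs => rw [pairSM_jordan ν]
  rw [VectorMeasure.sub_apply, Measure.toSignedMeasure_apply_measurable (hΦ hA),
    Measure.toSignedMeasure_apply_measurable (hΦ hA)]

lemma pairSM_map (ν : SignedMeasure I01) {Φm : I01 → I01} (hΦ : Measurable Φm)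
    {φ : I01 → ℝ} (hφ : BM φ) :
    pairSM (ν.map Φm) φ = pairSM ν (fun x => φ (Φm x)) := by
  have := signedMeasure_map_eq ν hΦ
  rw [pairSM_eq_of _ _ _ this hφ,
    integral_map hΦ.aemeasurable hφ.1.aestronglyMeasurable,
    integral_map hΦ.aemeasurable hφ.1.aestronglyMeasurable]
  rfl

lemma pairSM_Ff (f : I01 → ℝ) (ν : SignedMeasure I01) (hf : BM f) {φ : I01 → ℝ} (hφ : BM φ) :
    pairSM (Ff f ν) φ = pairSM ν (fun x => f x * φ x) := by
  set ρp := ν.toJordanDecomposition.posPart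
  set ρn := ν.toJordanDecomposition.negPart
  have hfp : Integrable f ρp := hf.integrable _
  have hfn : Integrable f ρn := hf.integrable _
  haveI i1 := isFiniteMeasure_withDensity_ofReal hfp.2
  haveI i2 := isFiniteMeasure_withDensity_ofReal hfp.neg.2
  haveI i3 := isFiniteMeasure_withDensity_ofReal hfn.2
  haveI i4 := isFiniteMeasure_withDensity_ofReal hfn.neg.2
  set P1 := ρp.withDensity fun x => ENNReal.ofReal (f x)
  set P2 := ρp.withDensity fun x => ENNReal.ofReal (-f x)
  set N1 := ρn.withDensity fun x => ENNReal.ofReal (f x)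
  set N2 := ρn.withDensity fun x => ENNReal.ofReal (-f x)
  have hFf : Ff f ν = (P1 + N2).toSignedMeasure - (P2 + N1).toSignedMeasure := by
    rw [Ff, withDensityᵥ_eq_withDensity_pos_part_sub_withDensity_neg_part hfp,
      withDensityᵥ_eq_withDensity_pos_part_sub_withDensity_neg_part hfn,
      Measure.toSignedMeasure_add, Measure.toSignedMeasure_add]
    abel
  rw [pairSM_eq_of _ _ _ hFf hφ, integral_add_measure (hφ.integrable _) (hφ.integrable _),
    integral_add_measure (hφ.integrable _) (hφ.integrable _)]
  have key : ∀ (ρ : Measure I01), ∀ _ : IsFiniteMeasure ρ,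
      (∫ x, φ x ∂ρ.withDensity fun x => ENNReal.ofReal (f x)) -
        (∫ x, φ x ∂ρ.withDensity fun x => ENNReal.ofReal (-f x)) =
      ∫ x, f x * φ x ∂ρ := by
    intro ρ hρ
    have e1 : (fun x => ENNReal.ofReal (f x)) = fun x => ((Real.toNNReal (f x) : ℝ≥0) : ℝ≥0∞) :=
      rfl
    have e2 : (fun x => ENNReal.ofReal (-f x)) =
        fun x => ((Real.toNNReal (-f x) : ℝ≥0) : ℝ≥0∞) := rfl
    rw [e1, e2, integral_withDensity_eq_integral_smul (hf.1.real_toNNReal) φ,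
      integral_withDensity_eq_integral_smul (id hf.1.neg.real_toNNReal : Measurable fun x => (-f x).toNNReal) φ]
    have hint1 : Integrable (fun x => Real.toNNReal (f x) • φ x) ρ := by
      obtain ⟨hm, M, hM⟩ := hf; obtain ⟨hm', M', hM'⟩ := hφ
      have : BM (fun x => max (f x) 0 * φ x) := by
        refine BM.mul ⟨hm.max measurable_const, ⟨|M|, fun x => ?_⟩⟩ ⟨hm', M', hM'⟩
        rw [abs_of_nonneg (le_max_right _ _)]
        exact max_le (le_trans (le_abs_self _) ((hM x).trans (le_abs_self M))) (abs_nonneg M)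
      simpa [NNReal.smul_def, Real.coe_toNNReal'] using this.integrable ρ
    have hint2 : Integrable (fun x => Real.toNNReal (-f x) • φ x) ρ := by
      obtain ⟨hm, M, hM⟩ := hf; obtain ⟨hm', M', hM'⟩ := hφ
      have : BM (fun x => max (-f x) 0 * φ x) := by
        refine BM.mul ⟨hm.neg.max measurable_const, ⟨|M|, fun x => ?_⟩⟩ ⟨hm', M', hM'⟩
        rw [abs_of_nonneg (le_max_right _ _)]
        refine max_le (le_trans (neg_le_abs _) ((hM x).trans (le_abs_self M))) (abs_nonneg M)
      simpa [NNReal.smul_def, Real.coe_toNNReal'] using this.integrable ρ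
    rw [← integral_sub hint1 hint2]
    congr 1
    ext x
    simp only [NNReal.smul_def, Real.coe_toNNReal', smul_eq_mul]
    rcases le_total 0 (f x) with h | h
    · have e1 : f x ⊔ 0 = f x := sup_eq_left.mpr h
      have e2 : -f x ⊔ 0 = 0 := sup_eq_right.mpr (neg_nonpos.mpr h)
      rw [e1, e2]; ring
    · have e1 : f x ⊔ 0 = 0 := sup_eq_right.mpr h
      have e2 : -f x ⊔ 0 = -f x := sup_eq_left.mpr (neg_nonneg.mpr h)
      rw [e1, e2]; ring
  have k1 := key ρp inferInstance
  have k2 := key ρn inferInstance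
  simp only [pairSM]
  rw [← k1, ← k2]
  ring
/-! ### The dual bounded-Lipschitz bound and measurability in time -/

lemma lipConst_nonneg (φ : I01 → ℝ) : 0 ≤ lipConst φ := by
  rw [lipConst]
  rcases Set.eq_empty_or_nonempty {K : ℝ | 0 ≤ K ∧ ∀ x y : I01, |φ x - φ y| ≤ K * dist x y}
    with h | h
  · rw [h, Real.sInf_empty]
  · exact le_csInf h (fun K hK => hK.1)

lemma supNorm_le {φ : I01 → ℝ} {M : ℝ} (h : ∀ x, |φ x| ≤ M) : supNorm φ ≤ M :=
  ciSup_le (fun x => h x)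

lemma le_supNorm {φ : I01 → ℝ} (hb : ∃ M, ∀ x, |φ x| ≤ M) (x : I01) : |φ x| ≤ supNorm φ := by
  obtain ⟨M, hM⟩ := hb
  exact le_ciSup ⟨M, fun r hr => by obtain ⟨y, rfl⟩ := hr; exact hM y⟩ x

lemma dualBLNorm_bddAbove (ν : SignedMeasure I01) :
    BddAbove {r : ℝ | ∃ φ : I01 → ℝ, Continuous φ ∧ blNorm φ ≤ 1 ∧ r = |pairSM ν φ|} := by
  refine ⟨tvNorm ν, fun r hr => ?_⟩
  obtain ⟨φ, hc, hbl, rfl⟩ := hr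
  have hbdd : ∃ M, ∀ x, |φ x| ≤ M := by
    obtain ⟨M, hM⟩ := (isCompact_univ (X := I01)).bddAbove_image (hc.abs.continuousOn)
    exact ⟨M, fun x => hM ⟨x, Set.mem_univ x, rfl⟩⟩
  have h1 : ∀ x, |φ x| ≤ supNorm φ := le_supNorm hbdd
  have h2 : supNorm φ ≤ 1 := by
    have := lipConst_nonneg φ
    rw [blNorm] at hbl
    linarith
  calc |pairSM ν φ| ≤ supNorm φ * tvNorm ν := pairSM_abs_le ν h1
  _ ≤ 1 * tvNorm ν := by
      apply mul_le_mul_of_nonneg_right h2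
      rw [tvNorm]; positivity
  _ = tvNorm ν := one_mul _

/-- The fundamental duality bound: for a Lipschitz continuous `χ`,
`|⟨ν, χ⟩| ≤ (M + L + 1)‖ν‖_BL*`. -/
lemma pairSM_le_dualBLNorm (ν : SignedMeasure I01) {χ : I01 → ℝ} (hc : Continuous χ)
    {L M : ℝ} (hL0 : 0 ≤ L) (hM0 : 0 ≤ M)
    (hL : ∀ x y : I01, |χ x - χ y| ≤ L * dist x y) (hM : ∀ x, |χ x| ≤ M) :
    |pairSM ν χ| ≤ (M + L + 1) * dualBLNorm ν := by
  set B : ℝ := M + L + 1 with hB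
  have hBpos : 0 < B := by positivity
  set χ' : I01 → ℝ := fun x => B⁻¹ * χ x with hχ'
  have hsup : supNorm χ' ≤ B⁻¹ * M := by
    refine supNorm_le (fun x => ?_)
    rw [hχ', abs_mul, abs_of_nonneg (by positivity : (0:ℝ) ≤ B⁻¹)]
    exact mul_le_mul_of_nonneg_left (hM x) (by positivity)
  have hlip : lipConst χ' ≤ B⁻¹ * L := by
    refine csInf_le ⟨0, fun K hK => hK.1⟩ ⟨by positivity, fun x y => ?_⟩
    simp only [hχ']
    rw [← mul_sub, abs_mul, abs_of_nonneg (by positivity : (0:ℝ) ≤ B⁻¹), mul_assoc]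
    exact mul_le_mul_of_nonneg_left (hL x y) (by positivity)
  have hbl : blNorm χ' ≤ 1 := by
    rw [blNorm]
    have : B⁻¹ * M + B⁻¹ * L ≤ 1 := by
      rw [← mul_add]
      rw [inv_mul_le_iff₀ hBpos]
      linarith
    linarith [hsup, hlip]
  have hmem : |pairSM ν χ'| ∈
      {r : ℝ | ∃ φ : I01 → ℝ, Continuous φ ∧ blNorm φ ≤ 1 ∧ r = |pairSM ν φ|} :=
    ⟨χ', continuous_const.mul hc, hbl, rfl⟩
  have h1 : |pairSM ν χ'| ≤ dualBLNorm ν := le_csSup (dualBLNorm_bddAbove ν) hmem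
  have h2 : pairSM ν χ = B * pairSM ν χ' := by
    rw [← pairSM_smul ν B χ']
    congr 1
    funext x
    rw [hχ', ← mul_assoc, mul_inv_cancel₀ hBpos.ne', one_mul]
  rw [h2, abs_mul, abs_of_nonneg hBpos.le]
  exact mul_le_mul_of_nonneg_left h1 hBpos.le
/-! ### Measurability in time of pairings with the mild solution -/

def clT (T : ℝ) (s : ℝ) : ℝ := max 0 (min s T)

lemma clT_mem {T : ℝ} (hT : 0 ≤ T) (s : ℝ) : clT T s ∈ Set.Icc 0 T :=
  ⟨le_max_left _ _, max_le (by linarith) (min_le_right _ _)⟩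

lemma continuous_clT (T : ℝ) : Continuous (clT T) :=
  continuous_const.max ((continuous_id.min continuous_const))

lemma clT_eq {T s : ℝ} (hs : s ∈ Set.Icc 0 T) : clT T s = s := by
  rw [clT, min_eq_left hs.2, max_eq_right hs.1]

lemma pairSM_tendsto_of_dominated {χ : I01 → ℝ} {χn : ℕ → I01 → ℝ}
    (hm : ∀ n, Measurable (χn n)) {M : ℝ} (hMn : ∀ n x, |χn n x| ≤ M)
    (hlim : ∀ x, Tendsto (fun n => χn n x) atTop (𝓝 (χ x))) (ν : SignedMeasure I01) :
    Tendsto (fun n => pairSM ν (χn n)) atTop (𝓝 (pairSM ν χ)) := by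
  have key : ∀ (ρ : Measure I01), IsFiniteMeasure ρ →
      Tendsto (fun n => ∫ x, χn n x ∂ρ) atTop (𝓝 (∫ x, χ x ∂ρ)) := by
    intro ρ hρ
    refine tendsto_integral_of_dominated_convergence (fun _ => M)
      (fun n => (hm n).aestronglyMeasurable) (integrable_const M)
      (fun n => Eventually.of_forall (fun x => by simpa [Real.norm_eq_abs] using hMn n x))
      (Eventually.of_forall (fun x => hlim x))
  exact (key _ inferInstance).sub (key _ inferInstance)

section TimeMeasurability

variable {T : ℝ} (hT : 0 ≤ T) (μ : ℝ → SignedMeasure I01)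
variable (hcont : ∀ t₀ ∈ Set.Icc (0:ℝ) T, Tendsto (fun t => dualBLNorm (μ t - μ t₀))
    (nhdsWithin t₀ (Set.Icc (0:ℝ) T)) (nhds 0))

include hT hcont

lemma cont_pairSM_clamp {χ : I01 → ℝ} (hc : Continuous χ) {L M : ℝ} (hL0 : 0 ≤ L) (hM0 : 0 ≤ M)
    (hL : ∀ x y : I01, |χ x - χ y| ≤ L * dist x y) (hM : ∀ x, |χ x| ≤ M) :
    Continuous fun s : ℝ => pairSM (μ (clT T s)) χ := by
  rw [continuous_iff_continuousAt]
  intro s₀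
  have ht₀ : clT T s₀ ∈ Set.Icc 0 T := clT_mem hT s₀
  have hcl : Tendsto (fun s => clT T s) (𝓝 s₀) (𝓝[Set.Icc (0:ℝ) T] (clT T s₀)) :=
    tendsto_nhdsWithin_of_tendsto_nhds_of_eventually_within _
      ((continuous_clT T).tendsto s₀) (Eventually.of_forall fun s => clT_mem hT s)
  have hd : Tendsto (fun s => dualBLNorm (μ (clT T s) - μ (clT T s₀))) (𝓝 s₀) (𝓝 0) :=
    (hcont _ ht₀).comp hcl
  have hBM : BM χ := ⟨hc.measurable, M, hM⟩
  have key : ∀ s, ‖pairSM (μ (clT T s)) χ - pairSM (μ (clT T s₀)) χ‖ ≤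
      (M + L + 1) * dualBLNorm (μ (clT T s) - μ (clT T s₀)) := by
    intro s
    rw [Real.norm_eq_abs, ← pairSM_sub_measure _ _ hBM]
    exact pairSM_le_dualBLNorm _ hc hL0 hM0 hL hM
  have h0 : Tendsto (fun s => pairSM (μ (clT T s)) χ - pairSM (μ (clT T s₀)) χ)
      (𝓝 s₀) (𝓝 0) := by
    refine squeeze_zero_norm key ?_
    simpa using hd.const_mul (M + L + 1)
  have := h0.add (tendsto_const_nhds (x := pairSM (μ (clT T s₀)) χ))
  simp only [sub_add_cancel, zero_add] at this
  exact this

omit hT hcont in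
lemma Pp_limit {χ : I01 → ℝ} {χn : ℕ → I01 → ℝ}
    (hm : ∀ n, Measurable (χn n)) {M : ℝ} (hMn : ∀ n x, |χn n x| ≤ M)
    (hlim : ∀ x, Tendsto (fun n => χn n x) atTop (𝓝 (χ x)))
    (hP : ∀ n, Measurable fun s : ℝ => pairSM (μ (clT T s)) (χn n)) :
    Measurable fun s : ℝ => pairSM (μ (clT T s)) χ :=
  measurable_of_tendsto_metrizable hP (tendsto_pi_nhds.mpr
    (fun s => pairSM_tendsto_of_dominated hm hMn hlim _))

lemma Pp_const (c : ℝ) : Measurable fun s : ℝ => pairSM (μ (clT T s)) (fun _ => c) :=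
  (cont_pairSM_clamp hT μ hcont continuous_const (le_refl 0) (abs_nonneg c)
    (fun x y => by simp) (fun x => le_rfl)).measurable

lemma Pp_indicator {A : Set I01} (hA : MeasurableSet A) :
    Measurable fun s : ℝ => pairSM (μ (clT T s)) (A.indicator fun _ => (1:ℝ)) := by
  have heq : (inferInstance : MeasurableSpace I01) =
      MeasurableSpace.generateFrom {C : Set I01 | IsClosed C} :=
    BorelSpace.measurable_eq.trans borel_eq_generateFrom_isClosed
  have hpi : IsPiSystem {C : Set I01 | IsClosed C} := fun s hs t ht _ => hs.inter ht
  refine MeasurableSpace.induction_on_inter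
    (C := fun A _ =>
      Measurable fun s : ℝ => pairSM (μ (clT T s)) (A.indicator fun _ => (1:ℝ)))
    heq hpi ?_ ?_ ?_ ?_ A hA
  · simp only [Set.indicator_empty]
    exact Pp_const hT μ hcont 0
  · -- closed sets
    rintro C (hC : IsClosed C)
    rcases Set.eq_empty_or_nonempty C with rfl | hne
    · simp only [Set.indicator_empty]
      exact Pp_const hT μ hcont 0
    set χn : ℕ → I01 → ℝ := fun n x => max 0 (1 - (n:ℝ) * Metric.infDist x C) with hχn
    have hcn : ∀ n, Continuous (χn n) :=
      fun n => continuous_const.max (continuous_const.sub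
        (continuous_const.mul (Metric.continuous_infDist_pt C)))
    have hLn : ∀ n, ∀ x y : I01, |χn n x - χn n y| ≤ (n:ℝ) * dist x y := by
      intro n x y
      have h1 : |χn n x - χn n y| ≤
          |(1 - (n:ℝ) * Metric.infDist x C) - (1 - (n:ℝ) * Metric.infDist y C)| := by
        simpa [max_comm] using
          abs_max_sub_max_le_abs (1 - (n:ℝ) * Metric.infDist x C)
            (1 - (n:ℝ) * Metric.infDist y C) 0
      have h2 : |Metric.infDist x C - Metric.infDist y C| ≤ dist x y := by
        rw [abs_sub_le_iff]
        constructor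
        · linarith [Metric.infDist_le_infDist_add_dist (x := x) (y := y) (s := C)]
        · linarith [Metric.infDist_le_infDist_add_dist (x := y) (y := x) (s := C),
            dist_comm x y]
      calc |χn n x - χn n y| ≤ |(n:ℝ) * Metric.infDist y C - (n:ℝ) * Metric.infDist x C| := by
            refine h1.trans_eq ?_
            ring_nf
      _ = (n:ℝ) * |Metric.infDist x C - Metric.infDist y C| := by
            rw [← mul_sub, abs_mul, Nat.abs_cast, abs_sub_comm]
      _ ≤ (n:ℝ) * dist x y := mul_le_mul_of_nonneg_left h2 (Nat.cast_nonneg n)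
    have hMn : ∀ n x, |χn n x| ≤ 1 := by
      intro n x
      rw [abs_of_nonneg (le_max_left _ _)]
      refine max_le zero_le_one ?_
      have : 0 ≤ (n:ℝ) * Metric.infDist x C :=
        mul_nonneg (Nat.cast_nonneg n) Metric.infDist_nonneg
      linarith
    have hlim : ∀ x, Tendsto (fun n => χn n x) atTop (𝓝 ((C.indicator fun _ => (1:ℝ)) x)) := by
      intro x
      by_cases hx : x ∈ C
      · have : ∀ n, χn n x = 1 := by
          intro n
          rw [hχn]
          simp [Metric.infDist_zero_of_mem hx]
        rw [Set.indicator_of_mem hx]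
        simp only [this]
        exact tendsto_const_nhds
      · have hpos : 0 < Metric.infDist x C := (hC.notMem_iff_infDist_pos hne).mp hx
        rw [Set.indicator_of_notMem hx]
        refine tendsto_atTop_of_eventually_const (i₀ := Nat.ceil ((Metric.infDist x C)⁻¹) + 1)
          (fun n hn => ?_)
        rw [hχn]
        have h1 : (1:ℝ) < (n:ℝ) * Metric.infDist x C := by
          have h2 : ((Metric.infDist x C)⁻¹ : ℝ) < (n:ℝ) := by
            calc ((Metric.infDist x C)⁻¹ : ℝ) ≤ (Nat.ceil ((Metric.infDist x C)⁻¹) : ℝ) :=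
                Nat.le_ceil _
            _ < (n:ℝ) := by exact_mod_cast Nat.lt_of_lt_of_le (Nat.lt_succ_self _) hn
          calc (1:ℝ) = (Metric.infDist x C)⁻¹ * Metric.infDist x C :=
                (inv_mul_cancel₀ hpos.ne').symm
          _ < (n:ℝ) * Metric.infDist x C := by
                exact mul_lt_mul_of_pos_right h2 hpos
        simp only [max_eq_left_iff]
        linarith
    exact Pp_limit μ (fun n => (hcn n).measurable) hMn hlim
      (fun n => (cont_pairSM_clamp hT μ hcont (hcn n) (Nat.cast_nonneg n) zero_le_one
        (hLn n) (hMn n)).measurable)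
  · -- complements
    intro A hAm hPA
    have hind : Aᶜ.indicator (fun _ => (1:ℝ)) =
        fun x => (fun _ => (1:ℝ)) x - A.indicator (fun _ => (1:ℝ)) x := by
      funext x
      by_cases hx : x ∈ A <;> simp [hx]
    have hBMA : BM (A.indicator fun _ => (1:ℝ)) :=
      ⟨measurable_const.indicator hAm, 1, fun x => by
        by_cases hx : x ∈ A <;> simp [hx]⟩
    have : (fun s : ℝ => pairSM (μ (clT T s)) (Aᶜ.indicator fun _ => (1:ℝ))) =
        fun s : ℝ => pairSM (μ (clT T s)) (fun _ => (1:ℝ)) -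
          pairSM (μ (clT T s)) (A.indicator fun _ => (1:ℝ)) := by
      funext s
      rw [hind]
      exact pairSM_sub _ (BM.const 1) hBMA
    rw [this]
    exact (Pp_const hT μ hcont 1).sub hPA
  · -- disjoint unions
    intro g hdisj hgm hPg
    set Bn : ℕ → Set I01 := fun n => ⋃ i ∈ Finset.range n, g i with hBn
    have hBm : ∀ n, MeasurableSet (Bn n) := fun n => (Finset.range n).measurableSet_biUnion
      (fun i _ => hgm i)
    have hind : ∀ n, Bn (n+1) = Bn n ∪ g n := by
      intro n
      rw [hBn]
      simp only [Finset.range_add_one]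
      rw [Finset.set_biUnion_insert]
      exact Set.union_comm _ _
    have hdisj2 : ∀ n, Disjoint (Bn n) (g n) := by
      intro n
      refine Set.disjoint_left.mpr (fun x hx hx' => ?_)
      simp only [hBn, Set.mem_iUnion, Finset.mem_range] at hx
      obtain ⟨i, hi, hxi⟩ := hx
      exact Set.disjoint_left.mp (hdisj (Nat.ne_of_lt hi)) hxi hx'
    have hPB : ∀ n, Measurable fun s : ℝ => pairSM (μ (clT T s)) ((Bn n).indicator
        fun _ => (1:ℝ)) := by
      intro n
      induction n with
      | zero =>
          simp only [hBn, Finset.range_zero]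
          simp only [Finset.notMem_empty, Set.iUnion_of_empty, Set.iUnion_empty,
            Set.indicator_empty]
          exact Pp_const hT μ hcont 0
      | succ n ih =>
          have heq : (Bn (n+1)).indicator (fun _ => (1:ℝ)) =
              fun x => (Bn n).indicator (fun _ => (1:ℝ)) x + (g n).indicator (fun _ => (1:ℝ)) x := by
            funext x
            rw [hind n]
            by_cases hx : x ∈ Bn n
            · have hx' : x ∉ g n := Set.disjoint_left.mp (hdisj2 n) hx
              simp [hx, hx']
            · by_cases hx' : x ∈ g n <;> simp [hx, hx']
          have h1 : (fun s : ℝ => pairSM (μ (clT T s)) ((Bn (n+1)).indicator fun _ => (1:ℝ))) =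
              fun s : ℝ => pairSM (μ (clT T s)) ((Bn n).indicator fun _ => (1:ℝ)) +
                pairSM (μ (clT T s)) ((g n).indicator fun _ => (1:ℝ)) := by
            funext s
            rw [heq]
            exact pairSM_add _ ⟨measurable_const.indicator (hBm n), 1, fun x => by
                by_cases hx : x ∈ Bn n <;> simp [hx]⟩
              ⟨measurable_const.indicator (hgm n), 1, fun x => by
                by_cases hx : x ∈ g n <;> simp [hx]⟩
          rw [h1]
          exact ih.add (hPg n)
    have hMn : ∀ n x, |(Bn n).indicator (fun _ => (1:ℝ)) x| ≤ 1 := by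
      intro n x
      by_cases hx : x ∈ Bn n <;> simp [hx]
    have hlim : ∀ x, Tendsto (fun n => (Bn n).indicator (fun _ => (1:ℝ)) x) atTop
        (𝓝 ((⋃ i, g i).indicator (fun _ => (1:ℝ)) x)) := by
      intro x
      by_cases hx : x ∈ ⋃ i, g i
      · obtain ⟨i₀, hi₀⟩ := Set.mem_iUnion.mp hx
        rw [Set.indicator_of_mem hx]
        refine tendsto_atTop_of_eventually_const (i₀ := i₀ + 1) (fun n hn => ?_)
        have : x ∈ Bn n := by
          simp only [hBn, Set.mem_iUnion, Finset.mem_range]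
          exact ⟨i₀, Nat.lt_of_lt_of_le (Nat.lt_succ_self _) hn, hi₀⟩
        rw [Set.indicator_of_mem this]
      · rw [Set.indicator_of_notMem hx]
        have : ∀ n, (Bn n).indicator (fun _ => (1:ℝ)) x = 0 := by
          intro n
          refine Set.indicator_of_notMem (fun hmem => hx ?_) _
          simp only [hBn, Set.mem_iUnion, Finset.mem_range] at hmem
          obtain ⟨i, _, hxi⟩ := hmem
          exact Set.mem_iUnion.mpr ⟨i, hxi⟩
        simp only [this]
        exact tendsto_const_nhds
    exact Pp_limit μ (fun n => measurable_const.indicator (hBm n)) hMn hlim hPB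

lemma Pp_simple (g : SimpleFunc I01 ℝ) :
    Measurable fun s : ℝ => pairSM (μ (clT T s)) g := by
  induction g using MeasureTheory.SimpleFunc.induction with
  | @const c A hA =>
      have heq : ⇑(SimpleFunc.piecewise A hA (SimpleFunc.const I01 c) (SimpleFunc.const I01 0)) =
          fun x => c * (A.indicator fun _ => (1:ℝ)) x := by
        funext x
        simp only [SimpleFunc.coe_piecewise, SimpleFunc.coe_const]
        by_cases hx : x ∈ A <;> simp [hx, Set.piecewise]
      rw [heq]
      have h1 : (fun s : ℝ => pairSM (μ (clT T s)) (fun x => c * (A.indicator fun _ => (1:ℝ)) x)) =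
          fun s : ℝ => c * pairSM (μ (clT T s)) (A.indicator fun _ => (1:ℝ)) := by
        funext s
        exact pairSM_smul _ c _
      rw [h1]
      exact (Pp_indicator hT μ hcont hA).const_mul c
  | @add f g hdisj hPf hPg =>
      have hBMf : BM ⇑f := by
        obtain ⟨C, hC⟩ := f.exists_forall_norm_le
        exact ⟨f.measurable, C, fun x => by simpa [Real.norm_eq_abs] using hC x⟩
      have hBMg : BM ⇑g := by
        obtain ⟨C, hC⟩ := g.exists_forall_norm_le
        exact ⟨g.measurable, C, fun x => by simpa [Real.norm_eq_abs] using hC x⟩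
      have h1 : (fun s : ℝ => pairSM (μ (clT T s)) ⇑(f + g)) =
          fun s : ℝ => pairSM (μ (clT T s)) ⇑f + pairSM (μ (clT T s)) ⇑g := by
        funext s
        have : ⇑(f + g) = fun x => f x + g x := by
          funext x; simp
        rw [this]
        exact pairSM_add _ hBMf hBMg
      rw [h1]
      exact hPf.add hPg

/-- **Main time-measurability lemma**: for any bounded measurable `χ`, the pairing
`s ↦ ⟨μ_{clT T s}, χ⟩` is measurable. -/
lemma measurable_pairSM_clamp {χ : I01 → ℝ} (hχ : BM χ) :
    Measurable fun s : ℝ => pairSM (μ (clT T s)) χ := by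
  obtain ⟨hm, M, hM⟩ := hχ
  have hM0 : 0 ≤ M := le_trans (abs_nonneg _) (hM (Classical.arbitrary I01))
  have hsm : StronglyMeasurable χ := hm.stronglyMeasurable
  refine Pp_limit μ (χn := fun n => ⇑(hsm.approxBounded M n))
    (fun n => (hsm.approxBounded M n).measurable) (M := M)
    (fun n x => by simpa [Real.norm_eq_abs] using hsm.norm_approxBounded_le hM0 n x)
    (fun x => hsm.tendsto_approxBounded_of_norm_le (by simpa [Real.norm_eq_abs] using hM x))
    (fun n => Pp_simple hT μ hcont _)

end TimeMeasurability
/-! ### Joint measurability of flow pairings -/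

section Master

variable (F : StoppedFlow) {T : ℝ} (hT : 0 ≤ T) (μ : ℝ → SignedMeasure I01)
variable (hcont : ∀ t₀ ∈ Set.Icc (0:ℝ) T, Tendsto (fun t => dualBLNorm (μ t - μ t₀))
    (nhdsWithin t₀ (Set.Icc (0:ℝ) T)) (nhds 0))
variable {θ : ℝ → ℝ → ℝ}
variable (hθ : ContinuousOn (fun p : ℝ × ℝ => θ p.1 p.2) (Set.Icc (0:ℝ) 1 ×ˢ Set.Icc (0:ℝ) T))
variable {g : I01 → ℝ} (hg : BM g)

/-- The clamped integrand used throughout. -/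
def masterχ (F : StoppedFlow) (T : ℝ) (θ : ℝ → ℝ → ℝ) (g : I01 → ℝ) (r t : ℝ) :
    I01 → ℝ :=
  fun y => g y * θ ((F.Φ (max r 0) y : ℝ)) (clT T t)

include hT hθ in
lemma masterχ_cont (r t : ℝ) :
    Continuous fun y => θ ((F.Φ (max r 0) y : ℝ)) (clT T t) := by
  have h1 : Continuous fun y : I01 => (((F.Φ (max r 0) y : ℝ)), clT T t) :=
    ((continuous_subtype_val.comp (F.cont_y (max r 0) (le_max_right r 0))).prodMk
      continuous_const)
  refine hθ.comp_continuous h1 (fun y => ?_)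
  exact Set.mk_mem_prod (F.Φ (max r 0) y).2 (clT_mem hT t)

include hT hθ hg in
lemma masterχ_BM (r t : ℝ) : BM (masterχ F T θ g r t) := by
  obtain ⟨Mθ, hMθ⟩ := ((isCompact_Icc (a := (0:ℝ)) (b := 1)).prod
    (isCompact_Icc (a := (0:ℝ)) (b := T))).exists_bound_of_continuousOn hθ
  refine hg.mul ⟨(masterχ_cont F hT hθ r t).measurable, Mθ, fun y => ?_⟩
  have := hMθ (((F.Φ (max r 0) y : ℝ)), clT T t)
    (Set.mk_mem_prod (F.Φ (max r 0) y).2 (clT_mem hT t))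
  simpa [Real.norm_eq_abs] using this

include hT hθ hg hcont in
/-- **Master joint measurability**: `(r, t, s) ↦ ⟨μ_{cl s}, g · θ(Φ_{r⁺}(·), cl t)⟩`
is jointly measurable. -/
lemma measurable_master :
    Measurable fun q : ℝ × ℝ × ℝ =>
      pairSM (μ (clT T q.2.2)) (masterχ F T θ g q.1 q.2.1) := by
  obtain ⟨Mθ, hMθ⟩ := ((isCompact_Icc (a := (0:ℝ)) (b := 1)).prod
    (isCompact_Icc (a := (0:ℝ)) (b := T))).exists_bound_of_continuousOn hθ
  obtain ⟨hgm, Mg, hMg⟩ := hg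
  set u : ℝ × ℝ → ℝ → ℝ := fun p s => pairSM (μ (clT T s)) (masterχ F T θ g p.1 p.2) with hu
  have hu_cont : ∀ s, Continuous fun p : ℝ × ℝ => u p s := by
    intro s
    rw [continuous_iff_seqContinuous]
    intro pn p hpn
    have key : ∀ y, Tendsto (fun n => masterχ F T θ g (pn n).1 (pn n).2 y) atTop
        (𝓝 (masterχ F T θ g p.1 p.2 y)) := by
      intro y
      simp only [masterχ]
      refine Tendsto.const_mul _ ?_
      have h1 : Tendsto (fun n => (pn n).1) atTop (𝓝 p.1) :=
        (continuous_fst.tendsto p).comp hpn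
      have h2 : Tendsto (fun n => (pn n).2) atTop (𝓝 p.2) :=
        (continuous_snd.tendsto p).comp hpn
      have h3 : Tendsto (fun n => ((F.Φ (max (pn n).1 0) y : ℝ), clT T (pn n).2)) atTop
          (𝓝 ((F.Φ (max p.1 0) y : ℝ), clT T p.2)) := by
        refine Tendsto.prodMk_nhds ?_ ?_
        · exact (continuous_subtype_val.tendsto _).comp
            (((F.cont_t y).tendsto _).comp ((continuous_id.max continuous_const).tendsto p.1
              |>.comp h1))
        · exact ((continuous_clT T).tendsto _).comp h2
      have h4 : Tendsto (fun n => ((F.Φ (max (pn n).1 0) y : ℝ), clT T (pn n).2)) atTop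
          (𝓝[Set.Icc (0:ℝ) 1 ×ˢ Set.Icc (0:ℝ) T] ((F.Φ (max p.1 0) y : ℝ), clT T p.2)) :=
        tendsto_nhdsWithin_of_tendsto_nhds_of_eventually_within _ h3
          (Eventually.of_forall (fun n =>
            Set.mk_mem_prod (F.Φ (max (pn n).1 0) y).2 (clT_mem hT (pn n).2)))
      exact (hθ _ (Set.mk_mem_prod (F.Φ (max p.1 0) y).2 (clT_mem hT p.2))).tendsto.comp h4
    have hbd : ∀ n y, |masterχ F T θ g (pn n).1 (pn n).2 y| ≤ |Mg| * |Mθ| := by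
      intro n y
      simp only [masterχ, abs_mul]
      refine mul_le_mul ((hMg y).trans (le_abs_self Mg)) ?_ (abs_nonneg _) (abs_nonneg _)
      refine le_trans ?_ (le_abs_self Mθ)
      simpa [Real.norm_eq_abs] using hMθ _
        (Set.mk_mem_prod (F.Φ (max (pn n).1 0) y).2 (clT_mem hT (pn n).2))
    exact pairSM_tendsto_of_dominated
      (fun n => ((masterχ_BM F hT hθ ⟨hgm, Mg, hMg⟩ (pn n).1 (pn n).2).1)) hbd key _
  have h_meas : ∀ p : ℝ × ℝ, Measurable (u p) := by
    intro p
    exact measurable_pairSM_clamp hT μ hcont (masterχ_BM F hT hθ ⟨hgm, Mg, hMg⟩ p.1 p.2)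
  have huu : Measurable (Function.uncurry u) :=
    measurable_uncurry_of_continuous_of_measurable hu_cont h_meas
  have : (fun q : ℝ × ℝ × ℝ => pairSM (μ (clT T q.2.2)) (masterχ F T θ g q.1 q.2.1)) =
      fun q : ℝ × ℝ × ℝ => Function.uncurry u ((q.1, q.2.1), q.2.2) := rfl
  rw [this]
  exact huu.comp ((measurable_fst.prodMk (measurable_fst.comp measurable_snd)).prodMk
    (measurable_snd.comp measurable_snd))

end Master
/-! ### FTC along characteristics -/

section CharFTC

variable (F : StoppedFlow) {T : ℝ}
variable {ψ ψx ψt : ℝ → ℝ → ℝ}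
variable (hψ : ∀ x ∈ Set.Icc (0:ℝ) 1, ∀ t ∈ Set.Icc (0:ℝ) T,
      HasFDerivWithinAt (fun p : ℝ × ℝ => ψ p.1 p.2)
        ((ψx x t) • (ContinuousLinearMap.fst ℝ ℝ ℝ) +
          (ψt x t) • (ContinuousLinearMap.snd ℝ ℝ ℝ))
        (Set.Icc (0:ℝ) 1 ×ˢ Set.Icc (0:ℝ) T) (x, t))
variable (hψx : ContinuousOn (fun p : ℝ × ℝ => ψx p.1 p.2) (Set.Icc (0:ℝ) 1 ×ˢ Set.Icc (0:ℝ) T))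
variable (hψt : ContinuousOn (fun p : ℝ × ℝ => ψt p.1 p.2) (Set.Icc (0:ℝ) 1 ×ˢ Set.Icc (0:ℝ) T))
variable (hbc : ∀ t ∈ Set.Icc (0:ℝ) T, ψx 0 t = 0 ∧ ψx 1 t = 0)
variable {K : ℝ≥0} (hv : LipschitzWith K F.v)

include hψ hψx hψt hbc hv in
/-- FTC along a (stopped) characteristic curve. -/
lemma char_FTC {a : ℝ} (ha : a ∈ Set.Icc (0:ℝ) T) (y : I01) :
    ∫ t in a..T, (ψt ((F.Φ (t - a) y : ℝ)) t +
        ψx ((F.Φ (t - a) y : ℝ)) t * F.v (F.Φ (t - a) y)) =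
      ψ ((F.Φ (T - a) y : ℝ)) T - ψ (y : ℝ) a := by
  obtain ⟨ha0, haT⟩ := ha
  set g : ℝ → ℝ := fun t => ψ ((F.Φ (t - a) y : ℝ)) t with hg
  set φ : ℝ → ℝ := fun t => ψt ((F.Φ (t - a) y : ℝ)) t +
      ψx ((F.Φ (t - a) y : ℝ)) t * F.v (F.Φ (t - a) y) with hφ
  set c : ℝ → ℝ × ℝ := fun t => (((F.Φ (t - a) y : ℝ)), t) with hc
  have hccont : Continuous c :=
    (continuous_subtype_val.comp ((F.cont_t y).comp (continuous_id.sub continuous_const))).prodMk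
      continuous_id
  have hcmaps : Set.MapsTo c (Set.Icc a T) (Set.Icc (0:ℝ) 1 ×ˢ Set.Icc (0:ℝ) T) := by
    intro t ht
    exact Set.mk_mem_prod (F.Φ (t - a) y).2 ⟨ha0.trans ht.1, ht.2⟩
  have hψcont : ContinuousOn (fun p : ℝ × ℝ => ψ p.1 p.2)
      (Set.Icc (0:ℝ) 1 ×ˢ Set.Icc (0:ℝ) T) :=
    fun p hp => (hψ p.1 hp.1 p.2 hp.2).continuousWithinAt
  have hgc : ContinuousOn g (Set.Icc a T) := by
    have := hψcont.comp hccont.continuousOn hcmaps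
    exact this
  have hφc : ContinuousOn φ (Set.Icc a T) := by
    have h1 : ContinuousOn (fun t => ψt ((F.Φ (t - a) y : ℝ)) t) (Set.Icc a T) :=
      hψt.comp hccont.continuousOn hcmaps
    have h2 : ContinuousOn (fun t => ψx ((F.Φ (t - a) y : ℝ)) t) (Set.Icc a T) :=
      hψx.comp hccont.continuousOn hcmaps
    have h3 : Continuous (fun t => F.v (F.Φ (t - a) y)) :=
      hv.continuous.comp ((F.cont_t y).comp (continuous_id.sub continuous_const))
    exact h1.add (h2.mul h3.continuousOn)
  -- the stopping time within `[a, T]`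
  set θ : ℝ := if F.τ y = ⊤ then T else min (a + (F.τ y).toReal) T with hθdef
  have haθ : a ≤ θ := by
    rw [hθdef]
    split
    · exact haT
    · exact le_min (le_add_of_nonneg_right ENNReal.toReal_nonneg) haT
  have hθT : θ ≤ T := by
    rw [hθdef]; split
    · exact le_rfl
    · exact min_le_right _ _
  -- derivative before the stopping time
  have deriv1 : ∀ t ∈ Set.Ioo a θ, HasDerivAt g (φ t) t := by
    intro t ht
    have h0 : (0:ℝ) ≤ t - a := by linarith [ht.1]
    have hlt : ENNReal.ofReal (t - a) < F.τ y := by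
      rw [hθdef] at ht
      by_cases hτ : F.τ y = ⊤
      · rw [hτ]; exact ENNReal.ofReal_lt_top
      · have ht2 := ht.2
        rw [if_neg hτ] at ht2
        have : t - a < (F.τ y).toReal := by
          have := lt_min_iff.mp ht2
          linarith [this.1]
        calc ENNReal.ofReal (t - a) < ENNReal.ofReal ((F.τ y).toReal) :=
            (ENNReal.ofReal_lt_ofReal_iff_of_nonneg h0).mpr this
        _ = F.τ y := ENNReal.ofReal_toReal hτ
    have hode := F.ode y (t - a) h0 hlt
    have hshift : HasDerivAt (fun t' => ((F.Φ (t' - a) y : ℝ))) (F.v (F.Φ (t - a) y)) t := by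
      have hsub : HasDerivAt (fun t' : ℝ => t' - a) 1 t := (hasDerivAt_id t).sub_const a
      have := HasDerivAt.comp t hode hsub
      exact HasDerivAt.comp_sub_const t a hode
    have hcurve : HasDerivAt c (F.v (F.Φ (t - a) y), 1) t := hshift.prodMk (hasDerivAt_id t)
    have hmem1 : ((F.Φ (t - a) y : ℝ)) ∈ Set.Icc (0:ℝ) 1 := (F.Φ (t - a) y).2
    have hmem2 : t ∈ Set.Icc (0:ℝ) T := ⟨by linarith [ht.1], le_of_lt (lt_of_lt_of_le ht.2 hθT)⟩
    have hF := hψ _ hmem1 t hmem2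
    have hcomp := HasFDerivWithinAt.comp_hasDerivWithinAt (f := c) t hF
      (hcurve.hasDerivWithinAt (s := Set.Icc a T)) hcmaps
    have hnhds : Set.Icc a T ∈ 𝓝 t := Icc_mem_nhds ht.1 (lt_of_lt_of_le ht.2 hθT)
    have hda := hcomp.hasDerivAt hnhds
    have : ((ψx ((F.Φ (t - a) y : ℝ)) t) • (ContinuousLinearMap.fst ℝ ℝ ℝ) +
        (ψt ((F.Φ (t - a) y : ℝ)) t) • (ContinuousLinearMap.snd ℝ ℝ ℝ))
          (F.v (F.Φ (t - a) y), 1) = φ t := by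
      simp only [ContinuousLinearMap.add_apply, ContinuousLinearMap.coe_smul',
        Pi.smul_apply, ContinuousLinearMap.coe_fst', ContinuousLinearMap.coe_snd',
        smul_eq_mul, hφ]
      ring
    rw [this] at hda
    exact hda
  -- derivative after the stopping time
  have deriv2 : ∀ t ∈ Set.Ioo θ T, HasDerivAt g (φ t) t := by
    intro t ht
    have hτ : F.τ y ≠ ⊤ := by
      intro hτtop
      rw [hθdef, if_pos hτtop] at ht
      exact absurd (ht.1.trans ht.2) (lt_irrefl T)
    have hθeq : θ = min (a + (F.τ y).toReal) T := by rw [hθdef, if_neg hτ]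
    have hta : a + (F.τ y).toReal < t := by
      rcases lt_or_ge (a + (F.τ y).toReal) T with h | h
      · rw [hθeq, min_eq_left h.le] at ht; exact ht.1
      · rw [hθeq, min_eq_right h] at ht; linarith [ht.1, ht.2]
    set b : I01 := F.Φ ((F.τ y).toReal) y with hbdef
    have hτle : F.τ y ≤ ENNReal.ofReal ((F.τ y).toReal) := by
      rw [ENNReal.ofReal_toReal hτ]
    have hfrozen : ∀ t' ∈ Set.Ioi (a + (F.τ y).toReal), F.Φ (t' - a) y = b := by
      intro t' ht'
      simp only [Set.mem_Ioi] at ht'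
      exact F.frozen y ((F.τ y).toReal) (t' - a) hτle (by linarith)
    have hev : g =ᶠ[𝓝 t] fun t' => ψ ((b : ℝ)) t' := by
      have hopen : Set.Ioi (a + (F.τ y).toReal) ∈ 𝓝 t := isOpen_Ioi.mem_nhds hta
      filter_upwards [hopen] with t' ht'
      rw [hg]
      simp only
      rw [hfrozen t' ht']
    have hbval := F.stopped y ((F.τ y).toReal) hτle
    have hmem1 : ((b : ℝ)) ∈ Set.Icc (0:ℝ) 1 := b.2
    have ht0T : t ∈ Set.Icc (0:ℝ) T :=
      ⟨by linarith [ht.1, haθ, ha0], ht.2.le⟩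
    have hline : HasDerivAt (fun t' => ψ ((b : ℝ)) t') (ψt ((b:ℝ)) t) t := by
      have hcurve : HasDerivAt (fun t' : ℝ => (((b:ℝ)), t')) ((0:ℝ), (1:ℝ)) t :=
        (hasDerivAt_const t ((b:ℝ))).prodMk (hasDerivAt_id t)
      have hmaps : Set.MapsTo (fun t' : ℝ => (((b:ℝ)), t')) (Set.Icc (0:ℝ) T)
          (Set.Icc (0:ℝ) 1 ×ˢ Set.Icc (0:ℝ) T) := fun t' ht' => Set.mk_mem_prod hmem1 ht'
      have hF := hψ _ hmem1 t ht0T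
      have hcomp := hF.comp_hasDerivWithinAt t
        (hcurve.hasDerivWithinAt (s := Set.Icc (0:ℝ) T)) hmaps
      have hnhds : Set.Icc (0:ℝ) T ∈ 𝓝 t :=
        Icc_mem_nhds (by linarith [ht.1, haθ, ha0]) ht.2
      have hda := hcomp.hasDerivAt hnhds
      have : ((ψx ((b:ℝ)) t) • (ContinuousLinearMap.fst ℝ ℝ ℝ) +
          (ψt ((b:ℝ)) t) • (ContinuousLinearMap.snd ℝ ℝ ℝ)) ((0:ℝ), (1:ℝ)) = ψt ((b:ℝ)) t := by
        simp [ContinuousLinearMap.add_apply, smul_eq_mul]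
      rw [this] at hda
      exact hda
    have hgd : HasDerivAt g (ψt ((b:ℝ)) t) t := (hev.hasDerivAt_iff).mpr hline
    have hΦt : F.Φ (t - a) y = b := hfrozen t hta
    have hψx0 : ψx ((b:ℝ)) t = 0 := by
      rcases hbval with h | h
      · have hb0 : ((b:ℝ)) = 0 := h
        rw [hb0]
        exact (hbc t ht0T).1
      · have hb1 : ((b:ℝ)) = 1 := h
        rw [hb1]
        exact (hbc t ht0T).2
    have : φ t = ψt ((b:ℝ)) t := by
      rw [hφ]
      simp only
      rw [hΦt, hψx0]
      ring
    rw [this]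
    exact hgd
  -- assemble by splitting at `θ`
  have hint1 : IntervalIntegrable φ volume a θ := by
    have h := hφc.mono (Set.Icc_subset_Icc le_rfl hθT)
    rw [← Set.uIcc_of_le haθ] at h
    exact h.intervalIntegrable
  have hint2 : IntervalIntegrable φ volume θ T := by
    have h := hφc.mono (Set.Icc_subset_Icc haθ le_rfl)
    rw [← Set.uIcc_of_le hθT] at h
    exact h.intervalIntegrable
  have hftc1 : ∫ t in a..θ, φ t = g θ - g a := by
    refine intervalIntegral.integral_eq_sub_of_hasDeriv_right_of_le haθ
      (hgc.mono (Set.Icc_subset_Icc le_rfl hθT)) (fun t ht => ?_) hint1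
    exact (deriv1 t ht).hasDerivWithinAt
  have hftc2 : ∫ t in θ..T, φ t = g T - g θ := by
    refine intervalIntegral.integral_eq_sub_of_hasDeriv_right_of_le hθT
      (hgc.mono (Set.Icc_subset_Icc haθ le_rfl)) (fun t ht => ?_) hint2
    exact (deriv2 t ht).hasDerivWithinAt
  have hsplit := intervalIntegral.integral_add_adjacent_intervals hint1 hint2
  have : ∫ t in a..T, φ t = g T - g a := by
    rw [← hsplit, hftc1, hftc2]; ring
  rw [hφ] at this
  rw [this, hg]
  simp only
  rw [sub_self, F.init y]
end CharFTC
/-! ### FTC along characteristics, integrated against a signed measure -/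

lemma intervalIntegrable_of_bounded {f : ℝ → ℝ} {a b : ℝ} (hm : Measurable f) {M : ℝ}
    (hb : ∀ t, |f t| ≤ M) : IntervalIntegrable f volume a b := by
  rw [intervalIntegrable_iff]
  refine (integrableOn_const (C := M) (lt_top_iff_ne_top.mp ?_)).mono' hm.aestronglyMeasurable
    (Eventually.of_forall (fun t => by simpa [Real.norm_eq_abs] using hb t))
  rw [Set.uIoc_eq_union]
  refine lt_of_le_of_lt (measure_union_le _ _) ?_
  rw [Real.volume_Ioc, Real.volume_Ioc]
  exact ENNReal.add_lt_top.mpr ⟨ENNReal.ofReal_lt_top, ENNReal.ofReal_lt_top⟩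

lemma isFiniteMeasure_restrict_Icc (a b : ℝ) :
    IsFiniteMeasure (volume.restrict (Set.Icc a b)) := by
  constructor
  rw [Measure.restrict_apply_univ, Real.volume_Icc]
  exact ENNReal.ofReal_lt_top

lemma interval_eq_Icc_integral {f : ℝ → ℝ} {a b : ℝ} (hab : a ≤ b) :
    ∫ t in a..b, f t = ∫ t in Set.Icc a b, f t := by
  rw [intervalIntegral.integral_of_le hab, MeasureTheory.integral_Icc_eq_integral_Ioc]

section CharFTCMeasure

variable (F : StoppedFlow) {T : ℝ}
variable {ψ ψx ψt : ℝ → ℝ → ℝ}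
variable (hψ : ∀ x ∈ Set.Icc (0:ℝ) 1, ∀ t ∈ Set.Icc (0:ℝ) T,
      HasFDerivWithinAt (fun p : ℝ × ℝ => ψ p.1 p.2)
        ((ψx x t) • (ContinuousLinearMap.fst ℝ ℝ ℝ) +
          (ψt x t) • (ContinuousLinearMap.snd ℝ ℝ ℝ))
        (Set.Icc (0:ℝ) 1 ×ˢ Set.Icc (0:ℝ) T) (x, t))
variable (hψx : ContinuousOn (fun p : ℝ × ℝ => ψx p.1 p.2) (Set.Icc (0:ℝ) 1 ×ˢ Set.Icc (0:ℝ) T))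
variable (hψt : ContinuousOn (fun p : ℝ × ℝ => ψt p.1 p.2) (Set.Icc (0:ℝ) 1 ×ˢ Set.Icc (0:ℝ) T))
variable (hbc : ∀ t ∈ Set.Icc (0:ℝ) T, ψx 0 t = 0 ∧ ψx 1 t = 0)
variable {K : ℝ≥0} (hv : LipschitzWith K F.v)

include hψ hψx hψt hbc hv in
/-- The FTC along characteristics, integrated against an arbitrary finite signed measure. -/
lemma char_FTC_measure (σ : SignedMeasure I01) {a : ℝ} (ha : a ∈ Set.Icc (0:ℝ) T) :
    pairSM (σ.map (F.Φ (T - a))) (fun x => ψ (x : ℝ) T) - pairSM σ (fun x => ψ (x : ℝ) a) =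
      ∫ t in a..T, pairSM (σ.map (F.Φ (t - a)))
        (fun x : I01 => ψt (x : ℝ) t + ψx (x : ℝ) t * F.v x) := by
  obtain ⟨ha0, haT⟩ := ha
  have hT : (0:ℝ) ≤ T := le_trans ha0 haT
  haveI hfin := isFiniteMeasure_restrict_Icc a T
  -- bounds on the rectangle
  have hrectc : IsCompact (Set.Icc (0:ℝ) 1 ×ˢ Set.Icc (0:ℝ) T) :=
    isCompact_Icc.prod isCompact_Icc
  have hψcont : ContinuousOn (fun p : ℝ × ℝ => ψ p.1 p.2)
      (Set.Icc (0:ℝ) 1 ×ˢ Set.Icc (0:ℝ) T) :=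
    fun p hp => (hψ p.1 hp.1 p.2 hp.2).continuousWithinAt
  obtain ⟨Mψ, hMψ⟩ := hrectc.exists_bound_of_continuousOn hψcont
  obtain ⟨Mt, hMt⟩ := hrectc.exists_bound_of_continuousOn hψt
  obtain ⟨Mx, hMx⟩ := hrectc.exists_bound_of_continuousOn hψx
  obtain ⟨Mv, hMv⟩ := (isCompact_univ (X := I01)).exists_bound_of_continuousOn
    hv.continuous.continuousOn
  have hMv' : ∀ z : I01, |F.v z| ≤ Mv := fun z => by
    simpa [Real.norm_eq_abs] using hMv z (Set.mem_univ z)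
  -- clamped integrand
  set u : ℝ → I01 → ℝ := fun t y =>
    ψt ((F.Φ (max (t - a) 0) y : ℝ)) (clT T t) +
      ψx ((F.Φ (max (t - a) 0) y : ℝ)) (clT T t) * F.v (F.Φ (max (t - a) 0) y) with hu
  have hmemrect : ∀ t (y : I01),
      (((F.Φ (max (t - a) 0) y : ℝ)), clT T t) ∈ Set.Icc (0:ℝ) 1 ×ˢ Set.Icc (0:ℝ) T :=
    fun t y => Set.mk_mem_prod (F.Φ (max (t - a) 0) y).2 (clT_mem hT t)
  have hu_cont_t : ∀ y, Continuous fun t => u t y := by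
    intro y
    have hcur : Continuous fun t => (((F.Φ (max (t - a) 0) y : ℝ)), clT T t) :=
      (continuous_subtype_val.comp ((F.cont_t y).comp
        ((continuous_id.sub continuous_const).max continuous_const))).prodMk (continuous_clT T)
    have h1 : Continuous fun t => ψt ((F.Φ (max (t - a) 0) y : ℝ)) (clT T t) :=
      hψt.comp_continuous hcur (fun t => hmemrect t y)
    have h2 : Continuous fun t => ψx ((F.Φ (max (t - a) 0) y : ℝ)) (clT T t) :=
      hψx.comp_continuous hcur (fun t => hmemrect t y)
    have h3 : Continuous fun t => F.v (F.Φ (max (t - a) 0) y) :=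
      hv.continuous.comp ((F.cont_t y).comp
        ((continuous_id.sub continuous_const).max continuous_const))
    exact h1.add (h2.mul h3)
  have hu_cont_y : ∀ t, Continuous fun y => u t y := by
    intro t
    have hcur : Continuous fun y : I01 => (((F.Φ (max (t - a) 0) y : ℝ)), clT T t) :=
      (continuous_subtype_val.comp (F.cont_y (max (t - a) 0) (le_max_right _ _))).prodMk
        continuous_const
    have h1 : Continuous fun y : I01 => ψt ((F.Φ (max (t - a) 0) y : ℝ)) (clT T t) :=
      hψt.comp_continuous hcur (fun y => hmemrect t y)
    have h2 : Continuous fun y : I01 => ψx ((F.Φ (max (t - a) 0) y : ℝ)) (clT T t) :=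
      hψx.comp_continuous hcur (fun y => hmemrect t y)
    have h3 : Continuous fun y : I01 => F.v (F.Φ (max (t - a) 0) y) :=
      hv.continuous.comp (F.cont_y (max (t - a) 0) (le_max_right _ _))
    exact h1.add (h2.mul h3)
  have hu_meas : Measurable (Function.uncurry u) :=
    measurable_uncurry_of_continuous_of_measurable hu_cont_t
      (fun t => (hu_cont_y t).measurable)
  set Mu : ℝ := |Mt| + |Mx| * |Mv| with hMu
  have hu_bd : ∀ t y, |u t y| ≤ Mu := by
    intro t y
    have b1 : |ψt ((F.Φ (max (t - a) 0) y : ℝ)) (clT T t)| ≤ |Mt| := by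
      refine le_trans ?_ (le_abs_self Mt)
      simpa [Real.norm_eq_abs] using hMt _ (hmemrect t y)
    have b2 : |ψx ((F.Φ (max (t - a) 0) y : ℝ)) (clT T t)| ≤ |Mx| := by
      refine le_trans ?_ (le_abs_self Mx)
      simpa [Real.norm_eq_abs] using hMx _ (hmemrect t y)
    have b3 : |F.v (F.Φ (max (t - a) 0) y)| ≤ |Mv| :=
      le_trans (hMv' _) (le_abs_self Mv)
    calc |u t y| ≤ |ψt ((F.Φ (max (t - a) 0) y : ℝ)) (clT T t)| +
        |ψx ((F.Φ (max (t - a) 0) y : ℝ)) (clT T t) * F.v (F.Φ (max (t - a) 0) y)| :=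
          abs_add_le _ _
    _ ≤ |Mt| + |Mx| * |Mv| := by
        rw [abs_mul]
        exact add_le_add b1 (mul_le_mul b2 b3 (abs_nonneg _) (abs_nonneg _))
    _ = Mu := rfl
  -- pointwise FTC
  have hFTCy : ∀ y : I01, ∫ t in a..T, u t y = ψ ((F.Φ (T - a) y : ℝ)) T - ψ (y : ℝ) a := by
    intro y
    have hcongr : Set.EqOn (fun t => u t y)
        (fun t => ψt ((F.Φ (t - a) y : ℝ)) t + ψx ((F.Φ (t - a) y : ℝ)) t * F.v (F.Φ (t - a) y))
        (Set.uIcc a T) := by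
      intro t ht
      rw [Set.uIcc_of_le haT] at ht
      have h1 : max (t - a) 0 = t - a := max_eq_left (by linarith [ht.1])
      have h2 : clT T t = t := clT_eq ⟨le_trans ha0 ht.1, ht.2⟩
      simp only [hu, h1, h2]
    rw [intervalIntegral.integral_congr hcongr]
    exact char_FTC F hψ hψx hψt hbc hv ⟨ha0, haT⟩ y
  -- swap integrals against each Jordan part
  have hswap : ∀ (ρ : Measure I01), IsFiniteMeasure ρ →
      ∫ y, (∫ t in Set.Icc a T, u t y) ∂ρ = ∫ t in Set.Icc a T, (∫ y, u t y ∂ρ) := by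
    intro ρ hρ
    have hint : Integrable (Function.uncurry (fun y t => u t y))
        (ρ.prod (volume.restrict (Set.Icc a T))) := by
      have hm2 : Measurable (Function.uncurry (fun y t => u t y)) := by
        have : Function.uncurry (fun y t => u t y) = (Function.uncurry u) ∘ Prod.swap := rfl
        rw [this]
        exact hu_meas.comp measurable_swap
      refine (integrable_const Mu).mono' hm2.aestronglyMeasurable
        (Eventually.of_forall (fun p => by
          simpa [Real.norm_eq_abs, Function.uncurry] using hu_bd p.2 p.1))
    exact integral_integral_swap hint
  -- identify both sides
  have hΦmeas : ∀ r : ℝ, 0 ≤ r → Measurable (F.Φ r) := fun r hr => (F.cont_y r hr).measurable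
  have hBMψT : BM (fun x : I01 => ψ (x : ℝ) T) := by
    refine ⟨(hψcont.comp_continuous (continuous_subtype_val.prodMk continuous_const)
      (fun y => Set.mk_mem_prod y.2 (Set.right_mem_Icc.mpr hT))).measurable, |Mψ|, fun x => ?_⟩
    refine le_trans ?_ (le_abs_self Mψ)
    simpa [Real.norm_eq_abs] using hMψ _ (Set.mk_mem_prod x.2 (Set.right_mem_Icc.mpr hT))
  have hLHS1 : pairSM (σ.map (F.Φ (T - a))) (fun x => ψ (x : ℝ) T) =
      pairSM σ (fun y => ψ ((F.Φ (T - a) y : ℝ)) T) :=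
    pairSM_map σ (hΦmeas (T - a) (by linarith)) hBMψT
  have hW_BM : ∀ t ∈ Set.Icc a T, BM (fun y => u t y) := by
    intro t _
    exact ⟨(hu_cont_y t).measurable, Mu, fun y => hu_bd t y⟩
  have hRHS : ∀ t ∈ Set.Icc a T,
      pairSM (σ.map (F.Φ (t - a))) (fun x : I01 => ψt (x : ℝ) t + ψx (x : ℝ) t * F.v x) =
      ∫ y, u t y ∂σ.toJordanDecomposition.posPart - ∫ y, u t y ∂σ.toJordanDecomposition.negPart := by
    intro t ht
    have h1 : max (t - a) 0 = t - a := max_eq_left (by linarith [ht.1])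
    have h2 : clT T t = t := clT_eq ⟨le_trans ha0 ht.1, ht.2⟩
    have hBMW : BM (fun x : I01 => ψt (x : ℝ) t + ψx (x : ℝ) t * F.v x) := by
      have hcur : Continuous fun x : I01 => (((x : I01) : ℝ), t) :=
        continuous_subtype_val.prodMk continuous_const
      have hmem : ∀ x : I01, (((x : I01) : ℝ), t) ∈ Set.Icc (0:ℝ) 1 ×ˢ Set.Icc (0:ℝ) T :=
        fun x => Set.mk_mem_prod x.2 ⟨le_trans ha0 ht.1, ht.2⟩
      refine ⟨(((hψt.comp_continuous hcur hmem).add ((hψx.comp_continuous hcur hmem).mul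
        hv.continuous))).measurable, |Mt| + |Mx| * |Mv|, fun x => ?_⟩
      have b1 : |ψt ((x : ℝ)) t| ≤ |Mt| := by
        refine le_trans ?_ (le_abs_self Mt)
        simpa [Real.norm_eq_abs] using hMt _ (hmem x)
      have b2 : |ψx ((x : ℝ)) t| ≤ |Mx| := by
        refine le_trans ?_ (le_abs_self Mx)
        simpa [Real.norm_eq_abs] using hMx _ (hmem x)
      have b3 : |F.v x| ≤ |Mv| := le_trans (hMv' x) (le_abs_self Mv)
      calc |ψt ((x:ℝ)) t + ψx ((x:ℝ)) t * F.v x| ≤ |ψt ((x:ℝ)) t| + |ψx ((x:ℝ)) t * F.v x| :=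
            abs_add_le _ _
      _ ≤ |Mt| + |Mx| * |Mv| := by
          rw [abs_mul]
          exact add_le_add b1 (mul_le_mul b2 b3 (abs_nonneg _) (abs_nonneg _))
    rw [pairSM_map σ (hΦmeas (t - a) (by linarith [ht.1])) hBMW]
    have : (fun y => (fun x : I01 => ψt (x : ℝ) t + ψx (x : ℝ) t * F.v x) (F.Φ (t - a) y)) =
        fun y => u t y := by
      funext y
      simp only [hu, h1, h2]
    rw [this]
    rfl
  -- the map `t ↦ ∫ u t dρ` is bounded measurable
  have hmargB : ∀ (ρ : Measure I01), IsFiniteMeasure ρ →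
      (Measurable fun t => ∫ y, u t y ∂ρ) ∧
        ∀ t, |∫ y, u t y ∂ρ| ≤ Mu * (ρ Set.univ).toReal := by
    intro ρ hρ
    constructor
    · exact (hu_meas.stronglyMeasurable.integral_prod_right (ν := ρ)).measurable
    · intro t
      have := norm_integral_le_of_norm_le_const (μ := ρ) (C := Mu) (f := fun y => u t y)
        (Eventually.of_forall (fun y => by simpa [Real.norm_eq_abs] using hu_bd t y))
      simpa [Real.norm_eq_abs, measureReal_def] using this
  set ρp := σ.toJordanDecomposition.posPart
  set ρn := σ.toJordanDecomposition.negPart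
  obtain ⟨hmp, hbp⟩ := hmargB ρp inferInstance
  obtain ⟨hmn, hbn⟩ := hmargB ρn inferInstance
  -- put things together
  have step1 : ∫ t in a..T, pairSM (σ.map (F.Φ (t - a)))
      (fun x : I01 => ψt (x : ℝ) t + ψx (x : ℝ) t * F.v x) =
      ∫ t in a..T, ((∫ y, u t y ∂ρp) - (∫ y, u t y ∂ρn)) := by
    refine intervalIntegral.integral_congr (fun t ht => ?_)
    rw [Set.uIcc_of_le haT] at ht
    exact hRHS t ht
  have step2 : ∫ t in a..T, ((∫ y, u t y ∂ρp) - (∫ y, u t y ∂ρn)) =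
      (∫ t in a..T, ∫ y, u t y ∂ρp) - ∫ t in a..T, ∫ y, u t y ∂ρn := by
    exact intervalIntegral.integral_sub
      (intervalIntegrable_of_bounded hmp hbp) (intervalIntegrable_of_bounded hmn hbn)
  have step3 : ∀ (ρ : Measure I01), IsFiniteMeasure ρ → (Measurable fun t => ∫ y, u t y ∂ρ) →
      ∫ t in a..T, ∫ y, u t y ∂ρ =
        ∫ y, (ψ ((F.Φ (T - a) y : ℝ)) T - ψ (y : ℝ) a) ∂ρ := by
    intro ρ hρ hm
    rw [interval_eq_Icc_integral haT, ← hswap ρ hρ]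
    refine integral_congr_ae (Eventually.of_forall (fun y => ?_))
    show (∫ t in Set.Icc a T, u t y) = ψ ((F.Φ (T - a) y : ℝ)) T - ψ (y : ℝ) a
    rw [← interval_eq_Icc_integral haT (f := fun t => u t y)]
    exact hFTCy y
  have hBMψa : BM (fun x : I01 => ψ (x : ℝ) a) := by
    refine ⟨(hψcont.comp_continuous (continuous_subtype_val.prodMk continuous_const)
      (fun y => Set.mk_mem_prod y.2 ⟨ha0, haT⟩)).measurable, |Mψ|, fun x => ?_⟩
    refine le_trans ?_ (le_abs_self Mψ)
    simpa [Real.norm_eq_abs] using hMψ _ (Set.mk_mem_prod x.2 ⟨ha0, haT⟩)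
  have hBMψTΦ : BM (fun y : I01 => ψ ((F.Φ (T - a) y : ℝ)) T) := by
    obtain ⟨hm, M, hM⟩ := hBMψT
    exact ⟨hm.comp (hΦmeas (T - a) (by linarith)), M, fun y => hM _⟩
  have final : ∀ (ρ : Measure I01), IsFiniteMeasure ρ →
      ∫ y, (ψ ((F.Φ (T - a) y : ℝ)) T - ψ (y : ℝ) a) ∂ρ =
        (∫ y, ψ ((F.Φ (T - a) y : ℝ)) T ∂ρ) - ∫ y, ψ (y : ℝ) a ∂ρ := by
    intro ρ hρ
    exact integral_sub (hBMψTΦ.integrable ρ) (hBMψa.integrable ρ)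
  rw [step1, step2, step3 ρp inferInstance hmp, step3 ρn inferInstance hmn,
    final ρp inferInstance, final ρn inferInstance, hLHS1]
  simp only [pairSM]
  ring

end CharFTCMeasure
/-! ### Fubini on the triangle -/

lemma triangle_package {T : ℝ} (hT : 0 ≤ T) {Hm : ℝ → ℝ → ℝ}
    (hmeas : Measurable (Function.uncurry Hm)) {M : ℝ} (hbd : ∀ s t, |Hm s t| ≤ M) :
    ∃ Gm G'm : ℝ → ℝ, Measurable Gm ∧ Measurable G'm ∧
      (∃ M', ∀ t, |Gm t| ≤ M') ∧ (∃ M', ∀ s, |G'm s| ≤ M') ∧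
      (∀ t ∈ Set.Icc (0:ℝ) T, Gm t = ∫ s in (0:ℝ)..t, Hm s t) ∧
      (∀ s ∈ Set.Icc (0:ℝ) T, G'm s = ∫ t in s..T, Hm s t) ∧
      (∫ s in (0:ℝ)..T, G'm s) = ∫ t in (0:ℝ)..T, Gm t := by
  haveI := isFiniteMeasure_restrict_Icc (0:ℝ) T
  set ν := volume.restrict (Set.Icc (0:ℝ) T) with hν
  set Kst : ℝ → ℝ → ℝ := fun s t => if s ≤ t then Hm s t else 0 with hKst
  have hKmeas : Measurable (Function.uncurry Kst) := by
    have : Function.uncurry Kst = fun p : ℝ × ℝ =>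
        if p.1 ≤ p.2 then Function.uncurry Hm p else 0 := rfl
    rw [this]
    exact Measurable.ite (measurableSet_le measurable_fst measurable_snd) hmeas measurable_const
  have hKbd : ∀ s t, |Kst s t| ≤ |M| := by
    intro s t
    rw [hKst]
    dsimp only
    split
    · exact (hbd s t).trans (le_abs_self M)
    · simpa using abs_nonneg M
  set Gm : ℝ → ℝ := fun t => ∫ s, Kst s t ∂ν with hGm
  set G'm : ℝ → ℝ := fun s => ∫ t, Kst s t ∂ν with hG'm
  have hGmmeas : Measurable Gm :=
    (hKmeas.stronglyMeasurable.integral_prod_left (μ := ν)).measurable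
  have hG'mmeas : Measurable G'm :=
    (hKmeas.stronglyMeasurable.integral_prod_right (ν := ν)).measurable
  have hGmbd : ∀ t, |Gm t| ≤ |M| * (ν Set.univ).toReal := by
    intro t
    have := norm_integral_le_of_norm_le_const (μ := ν) (C := |M|) (f := fun s => Kst s t)
      (Eventually.of_forall (fun s => by simpa [Real.norm_eq_abs] using hKbd s t))
    simpa [Real.norm_eq_abs, measureReal_def] using this
  have hG'mbd : ∀ s, |G'm s| ≤ |M| * (ν Set.univ).toReal := by
    intro s
    have := norm_integral_le_of_norm_le_const (μ := ν) (C := |M|) (f := fun t => Kst s t)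
      (Eventually.of_forall (fun t => by simpa [Real.norm_eq_abs] using hKbd s t))
    simpa [Real.norm_eq_abs, measureReal_def] using this
  have hint : Integrable (Function.uncurry Kst) (ν.prod ν) := by
    refine (integrable_const |M|).mono' hKmeas.aestronglyMeasurable (Eventually.of_forall ?_)
    rintro ⟨s, t⟩
    simpa [Real.norm_eq_abs, Function.uncurry] using hKbd s t
  have hswap : ∫ s, (∫ t, Kst s t ∂ν) ∂ν = ∫ t, (∫ s, Kst s t ∂ν) ∂ν :=
    integral_integral_swap hint
  have inner2 : ∀ t ∈ Set.Icc (0:ℝ) T, Gm t = ∫ s in (0:ℝ)..t, Hm s t := by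
    intro t ht
    have h1 : (fun s => Kst s t) = (Set.Iic t).indicator (fun s => Hm s t) := by
      funext s
      simp [hKst, Set.indicator_apply, Set.mem_Iic]
    rw [hGm]
    dsimp only
    rw [h1, integral_indicator measurableSet_Iic, hν,
      Measure.restrict_restrict measurableSet_Iic]
    have hset : Set.Iic t ∩ Set.Icc 0 T = Set.Icc 0 t := by
      ext s
      simp only [Set.mem_inter_iff, Set.mem_Iic, Set.mem_Icc]
      constructor
      · rintro ⟨h1', h2', _⟩; exact ⟨h2', h1'⟩
      · rintro ⟨h1', h2'⟩; exact ⟨h2', h1', h2'.trans ht.2⟩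
    rw [hset]
    exact (interval_eq_Icc_integral ht.1).symm
  have inner1 : ∀ s ∈ Set.Icc (0:ℝ) T, G'm s = ∫ t in s..T, Hm s t := by
    intro s hs
    have h1 : (fun t => Kst s t) = (Set.Ici s).indicator (fun t => Hm s t) := by
      funext t
      simp [hKst, Set.indicator_apply, Set.mem_Ici]
    rw [hG'm]
    dsimp only
    rw [h1, integral_indicator measurableSet_Ici, hν,
      Measure.restrict_restrict measurableSet_Ici]
    have hset : Set.Ici s ∩ Set.Icc 0 T = Set.Icc s T := by
      ext t
      simp only [Set.mem_inter_iff, Set.mem_Ici, Set.mem_Icc]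
      constructor
      · rintro ⟨h1', _, h3'⟩; exact ⟨h1', h3'⟩
      · rintro ⟨h1', h2'⟩; exact ⟨h1', hs.1.trans h1', h2'⟩
    rw [hset]
    exact (interval_eq_Icc_integral hs.2).symm
  refine ⟨Gm, G'm, hGmmeas, hG'mmeas, ⟨_, hGmbd⟩, ⟨_, hG'mbd⟩, inner2, inner1, ?_⟩
  rw [interval_eq_Icc_integral hT, interval_eq_Icc_integral hT]
  exact hswap

/-- Mild solutions of `∂_t μ + ∂_x(v μ) = f·μ` on `[0,1]` (with stopped flow at the
boundary) are weak solutions: `f` is piecewise bounded Lipschitz (Lipschitz away from a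
finite set `D` of discontinuities, on which `v` does not vanish), `μ` is a continuous
(w.r.t. `‖·‖_BL*`), TV-bounded solution of the variation of constants formula, and the
weak formulation holds for every `C¹` test function with no-flux boundary conditions. -/
theorem mild_is_weak_fixed_velocity (F : StoppedFlow) (K : ℝ≥0) (hv : LipschitzWith K F.v)
    (T : ℝ) (hT : 0 < T)
    -- `f` piecewise bounded Lipschitz, discontinuities away from zeros of `v`
    (f : I01 → ℝ) (hfmeas : Measurable f) (D : Finset I01) (Kf Cf : ℝ)
    (hfb : ∀ x, |f x| ≤ Cf)
    (hfl : ∀ x y : I01, (∀ z ∈ D,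
        (z : ℝ) ∉ Set.Ioc (min (x:ℝ) (y:ℝ)) (max (x:ℝ) (y:ℝ))) →
        |f x - f y| ≤ Kf * dist (x:ℝ) (y:ℝ))
    (hfc : ∀ x : I01, x ∉ D → ContinuousAt f x)
    (hD : ∀ z ∈ D, F.v z ≠ 0)
    -- `μ` is the mild solution with initial value `ν₀`
    (ν₀ : SignedMeasure I01) (μ : ℝ → SignedMeasure I01) (hμ0 : μ 0 = ν₀)
    (hcont : ∀ t₀ ∈ Set.Icc (0:ℝ) T, Tendsto (fun t => dualBLNorm (μ t - μ t₀))
        (nhdsWithin t₀ (Set.Icc (0:ℝ) T)) (nhds 0))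
    (hTVbdd : ∃ C : ℝ, ∀ t ∈ Set.Icc (0:ℝ) T, tvNorm (μ t) ≤ C)
    (hVOC : ∀ t ∈ Set.Icc (0:ℝ) T, ∀ φ : I01 → ℝ, Continuous φ →
        pairSM (μ t) φ = pairSM (ν₀.map (F.Φ t)) φ +
          ∫ s in (0:ℝ)..t, pairSM ((Ff f (μ s)).map (F.Φ (t - s))) φ)
    -- test function
    (ψ ψx ψt : ℝ → ℝ → ℝ)
    (hψ : ∀ x ∈ Set.Icc (0:ℝ) 1, ∀ t ∈ Set.Icc (0:ℝ) T,
      HasFDerivWithinAt (fun p : ℝ × ℝ => ψ p.1 p.2)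
        ((ψx x t) • (ContinuousLinearMap.fst ℝ ℝ ℝ) +
          (ψt x t) • (ContinuousLinearMap.snd ℝ ℝ ℝ))
        (Set.Icc (0:ℝ) 1 ×ˢ Set.Icc (0:ℝ) T) (x, t))
    (hψx : ContinuousOn (fun p : ℝ × ℝ => ψx p.1 p.2) (Set.Icc (0:ℝ) 1 ×ˢ Set.Icc (0:ℝ) T))
    (hψt : ContinuousOn (fun p : ℝ × ℝ => ψt p.1 p.2) (Set.Icc (0:ℝ) 1 ×ˢ Set.Icc (0:ℝ) T))
    (hbc : ∀ t ∈ Set.Icc (0:ℝ) T, ψx 0 t = 0 ∧ ψx 1 t = 0)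
    :
    pairSM (μ T) (fun x => ψ (x : ℝ) T) - pairSM ν₀ (fun x => ψ (x : ℝ) 0) =
      (∫ t in (0:ℝ)..T,
          pairSM (μ t) (fun x => ψt (x : ℝ) t + ψx (x : ℝ) t * F.v x)) +
        ∫ t in (0:ℝ)..T, pairSM (Ff f (μ t)) (fun x => ψ (x : ℝ) t) := by
  have hT0 : (0:ℝ) ≤ T := hT.le
  have hTmem : T ∈ Set.Icc (0:ℝ) T := ⟨hT0, le_rfl⟩
  have h0mem : (0:ℝ) ∈ Set.Icc (0:ℝ) T := ⟨le_rfl, hT0⟩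
  have hclTT : clT T T = T := clT_eq hTmem
  obtain ⟨Ctv, hCtv⟩ := hTVbdd
  set Ctv2 : ℝ := max Ctv 0 with hCtv2
  have hCtv2nn : 0 ≤ Ctv2 := le_max_right _ _
  have htv : ∀ s : ℝ, tvNorm (μ (clT T s)) ≤ Ctv2 :=
    fun s => (hCtv _ (clT_mem hT0 s)).trans (le_max_left _ _)
  -- bounds on the rectangle
  have hrectc : IsCompact (Set.Icc (0:ℝ) 1 ×ˢ Set.Icc (0:ℝ) T) :=
    isCompact_Icc.prod isCompact_Icc
  have hψcont : ContinuousOn (fun p : ℝ × ℝ => ψ p.1 p.2)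
      (Set.Icc (0:ℝ) 1 ×ˢ Set.Icc (0:ℝ) T) :=
    fun p hp => (hψ p.1 hp.1 p.2 hp.2).continuousWithinAt
  obtain ⟨Mψ, hMψ⟩ := hrectc.exists_bound_of_continuousOn hψcont
  obtain ⟨Mt, hMt⟩ := hrectc.exists_bound_of_continuousOn hψt
  obtain ⟨Mx, hMx⟩ := hrectc.exists_bound_of_continuousOn hψx
  obtain ⟨Mv, hMv⟩ := (isCompact_univ (X := I01)).exists_bound_of_continuousOn
    hv.continuous.continuousOn
  have hMv' : ∀ z : I01, |F.v z| ≤ Mv := fun z => by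
    simpa [Real.norm_eq_abs] using hMv z (Set.mem_univ z)
  have hMψ' : ∀ p ∈ Set.Icc (0:ℝ) 1 ×ˢ Set.Icc (0:ℝ) T, |ψ (p : ℝ × ℝ).1 p.2| ≤ |Mψ| :=
    fun p hp => le_trans (by simpa [Real.norm_eq_abs] using hMψ p hp) (le_abs_self Mψ)
  -- the velocity-weighted test function, as a function on `ℝ`
  set Wθ : ℝ → ℝ → ℝ :=
    fun x t => ψt x t + ψx x t * F.v (Set.projIcc (0:ℝ) 1 zero_le_one x) with hWθ
  have hWθcont : ContinuousOn (fun p : ℝ × ℝ => Wθ p.1 p.2)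
      (Set.Icc (0:ℝ) 1 ×ˢ Set.Icc (0:ℝ) T) := by
    refine hψt.add (hψx.mul ?_)
    exact ((hv.continuous.comp continuous_projIcc).comp continuous_fst).continuousOn
  set MW : ℝ := |Mt| + |Mx| * |Mv| with hMWdef
  have hMW : ∀ p ∈ Set.Icc (0:ℝ) 1 ×ˢ Set.Icc (0:ℝ) T, |Wθ (p : ℝ × ℝ).1 p.2| ≤ MW := by
    intro p hp
    have b1 : |ψt p.1 p.2| ≤ |Mt| :=
      le_trans (by simpa [Real.norm_eq_abs] using hMt p hp) (le_abs_self Mt)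
    have b2 : |ψx p.1 p.2| ≤ |Mx| :=
      le_trans (by simpa [Real.norm_eq_abs] using hMx p hp) (le_abs_self Mx)
    have b3 : |F.v (Set.projIcc (0:ℝ) 1 zero_le_one p.1)| ≤ |Mv| :=
      le_trans (hMv' _) (le_abs_self Mv)
    calc |Wθ p.1 p.2| ≤ |ψt p.1 p.2| + |ψx p.1 p.2 * F.v (Set.projIcc (0:ℝ) 1 zero_le_one p.1)| :=
          abs_add_le _ _
    _ ≤ |Mt| + |Mx| * |Mv| := by
        rw [abs_mul]
        exact add_le_add b1 (mul_le_mul b2 b3 (abs_nonneg _) (abs_nonneg _))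
  have hBMf : BM f := ⟨hfmeas, Cf, hfb⟩
  have hΦmeas : ∀ r : ℝ, 0 ≤ r → Measurable (F.Φ r) := fun r hr => (F.cont_y r hr).measurable
  have hBMcomp : ∀ {χ : I01 → ℝ}, BM χ → ∀ r : ℝ, 0 ≤ r → BM (fun y => χ (F.Φ r y)) := by
    intro χ hχ r hr
    obtain ⟨hm, M, hM⟩ := hχ
    exact ⟨hm.comp (hΦmeas r hr), M, fun y => hM _⟩
  -- continuity and boundedness of the test-function slices
  have hψfc : ∀ a ∈ Set.Icc (0:ℝ) T, Continuous (fun x : I01 => ψ (x : ℝ) a) :=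
    fun a ha => hψcont.comp_continuous (continuous_subtype_val.prodMk continuous_const)
      (fun y => Set.mk_mem_prod y.2 ha)
  have hBMψf : ∀ a ∈ Set.Icc (0:ℝ) T, BM (fun x : I01 => ψ (x : ℝ) a) :=
    fun a ha => ⟨(hψfc a ha).measurable, |Mψ|,
      fun x => hMψ' _ (Set.mk_mem_prod x.2 ha)⟩
  have hWc : ∀ t ∈ Set.Icc (0:ℝ) T,
      Continuous (fun x : I01 => ψt (x : ℝ) t + ψx (x : ℝ) t * F.v x) := by
    intro t ht
    have hcur : Continuous fun x : I01 => (((x : I01) : ℝ), t) :=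
      continuous_subtype_val.prodMk continuous_const
    have hmem : ∀ x : I01, (((x : I01) : ℝ), t) ∈ Set.Icc (0:ℝ) 1 ×ˢ Set.Icc (0:ℝ) T :=
      fun x => Set.mk_mem_prod x.2 ht
    exact (hψt.comp_continuous hcur hmem).add
      ((hψx.comp_continuous hcur hmem).mul hv.continuous)
  have hWbd : ∀ t ∈ Set.Icc (0:ℝ) T, ∀ x : I01,
      |ψt (x : ℝ) t + ψx (x : ℝ) t * F.v x| ≤ MW := by
    intro t ht x
    have : Wθ ((x : ℝ)) t = ψt (x : ℝ) t + ψx (x : ℝ) t * F.v x := by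
      rw [hWθ]
      simp only
      rw [Set.projIcc_val]
    rw [← this]
    exact hMW (((x : I01) : ℝ), t) (Set.mk_mem_prod x.2 ht)
  have hBMW : ∀ t ∈ Set.Icc (0:ℝ) T,
      BM (fun x : I01 => ψt (x : ℝ) t + ψx (x : ℝ) t * F.v x) :=
    fun t ht => ⟨(hWc t ht).measurable, MW, hWbd t ht⟩
  -- the measurable clamped versions
  set Em : ℝ → ℝ := fun s => pairSM (μ (clT T s)) (masterχ F T ψ f (T - s) T) with hEm
  set Cm : ℝ → ℝ := fun s => pairSM (μ (clT T s)) (masterχ F T ψ f 0 s) with hCm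
  set Bm : ℝ → ℝ := fun t =>
    pairSM (μ (clT T t)) (masterχ F T Wθ (fun _ => (1:ℝ)) 0 t) with hBm
  set Hm : ℝ → ℝ → ℝ := fun s t =>
    pairSM (μ (clT T s)) (masterχ F T Wθ f (t - s) t) with hHmdef
  have hMM1 := measurable_master F hT0 μ hcont hψcont hBMf
  have hMMW := measurable_master F hT0 μ hcont hWθcont hBMf
  have hMMW1 := measurable_master F hT0 μ hcont hWθcont (BM.const 1)
  have hEmm : Measurable Em := by
    have : Em = (fun q : ℝ × ℝ × ℝ => pairSM (μ (clT T q.2.2)) (masterχ F T ψ f q.1 q.2.1)) ∘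
        (fun s : ℝ => ((T - s, T, s) : ℝ × ℝ × ℝ)) := rfl
    rw [this]
    exact hMM1.comp ((measurable_const.sub measurable_id).prodMk
      (measurable_const.prodMk measurable_id))
  have hCmm : Measurable Cm := by
    have : Cm = (fun q : ℝ × ℝ × ℝ => pairSM (μ (clT T q.2.2)) (masterχ F T ψ f q.1 q.2.1)) ∘
        (fun s : ℝ => ((0, s, s) : ℝ × ℝ × ℝ)) := rfl
    rw [this]
    exact hMM1.comp (measurable_const.prodMk (measurable_id.prodMk measurable_id))
  have hBmm : Measurable Bm := by
    have : Bm = (fun q : ℝ × ℝ × ℝ =>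
        pairSM (μ (clT T q.2.2)) (masterχ F T Wθ (fun _ => (1:ℝ)) q.1 q.2.1)) ∘
        (fun t : ℝ => ((0, t, t) : ℝ × ℝ × ℝ)) := rfl
    rw [this]
    exact hMMW1.comp (measurable_const.prodMk (measurable_id.prodMk measurable_id))
  have hHmm : Measurable (Function.uncurry Hm) := by
    have : Function.uncurry Hm = (fun q : ℝ × ℝ × ℝ =>
        pairSM (μ (clT T q.2.2)) (masterχ F T Wθ f q.1 q.2.1)) ∘
        (fun p : ℝ × ℝ => ((p.2 - p.1, p.2, p.1) : ℝ × ℝ × ℝ)) := rfl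
    rw [this]
    exact hMMW.comp ((measurable_snd.sub measurable_fst).prodMk
      (measurable_snd.prodMk measurable_fst))
  -- generic bound for pairings with masterχ
  have bound_gen : ∀ (θ : ℝ → ℝ → ℝ) (Mθ : ℝ),
      (∀ p ∈ Set.Icc (0:ℝ) 1 ×ˢ Set.Icc (0:ℝ) T, |θ (p : ℝ × ℝ).1 p.2| ≤ Mθ) →
      ∀ (g : I01 → ℝ) (Mg : ℝ), (∀ y, |g y| ≤ Mg) →
      ∀ r t s : ℝ, |pairSM (μ (clT T s)) (masterχ F T θ g r t)| ≤ (|Mg| * |Mθ|) * Ctv2 := by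
    intro θ Mθ hMθ g Mg hMg r t s
    have hb : ∀ y, |masterχ F T θ g r t y| ≤ |Mg| * |Mθ| := by
      intro y
      have h1 : |g y| ≤ |Mg| := (hMg y).trans (le_abs_self Mg)
      have h2 : |θ ((F.Φ (max r 0) y : ℝ)) (clT T t)| ≤ |Mθ| := by
        refine le_trans (hMθ _ (Set.mk_mem_prod (F.Φ (max r 0) y).2 (clT_mem hT0 t))) ?_
        exact le_abs_self Mθ
      calc |masterχ F T θ g r t y| = |g y| * |θ ((F.Φ (max r 0) y : ℝ)) (clT T t)| := by
            rw [masterχ, abs_mul]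
      _ ≤ |Mg| * |Mθ| := mul_le_mul h1 h2 (abs_nonneg _) (abs_nonneg _)
    refine (pairSM_abs_le _ hb).trans ?_
    exact mul_le_mul_of_nonneg_left (htv s) (by positivity)
  have hMψ'' : ∀ p ∈ Set.Icc (0:ℝ) 1 ×ˢ Set.Icc (0:ℝ) T, |ψ (p : ℝ × ℝ).1 p.2| ≤ |Mψ| := hMψ'
  have hEmbd : ∀ s, |Em s| ≤ (|Cf| * |(|Mψ|)|) * Ctv2 :=
    fun s => bound_gen ψ |Mψ| hMψ'' f Cf hfb (T - s) T s
  have hCmbd : ∀ s, |Cm s| ≤ (|Cf| * |(|Mψ|)|) * Ctv2 :=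
    fun s => bound_gen ψ |Mψ| hMψ'' f Cf hfb 0 s s
  have hBmbd : ∀ t, |Bm t| ≤ (|(1:ℝ)| * |MW|) * Ctv2 :=
    fun t => bound_gen Wθ MW hMW (fun _ => (1:ℝ)) 1 (fun y => by norm_num) 0 t t
  have hHmbd : ∀ s t, |Hm s t| ≤ (|Cf| * |MW|) * Ctv2 :=
    fun s t => bound_gen Wθ MW hMW f Cf hfb (t - s) t s
  -- interval integrability
  have hEmint : IntervalIntegrable Em volume 0 T := intervalIntegrable_of_bounded hEmm hEmbd
  have hCmint : IntervalIntegrable Cm volume 0 T := intervalIntegrable_of_bounded hCmm hCmbd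
  have hBmint : IntervalIntegrable Bm volume 0 T := intervalIntegrable_of_bounded hBmm hBmbd
  -- the triangle package
  obtain ⟨Gm, G'm, hGmm, hG'mm, ⟨MG, hMG⟩, ⟨MG', hMG'⟩, hGmeq, hG'meq, hGswap⟩ :=
    triangle_package hT0 hHmm hHmbd
  have hGmint : IntervalIntegrable Gm volume 0 T := intervalIntegrable_of_bounded hGmm hMG
  have hG'mint : IntervalIntegrable G'm volume 0 T := intervalIntegrable_of_bounded hG'mm hMG'
  -- identification of the clamped versions with the actual quantities, on `[0, T]`
  have hEeq : ∀ s ∈ Set.Icc (0:ℝ) T,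
      pairSM ((Ff f (μ s)).map (F.Φ (T - s))) (fun x => ψ (x : ℝ) T) = Em s := by
    intro s hs
    have h1 : (0:ℝ) ≤ T - s := by linarith [hs.2]
    rw [pairSM_map _ (hΦmeas _ h1) (hBMψf T hTmem),
      pairSM_Ff f _ hBMf (hBMcomp (hBMψf T hTmem) _ h1)]
    rw [hEm]
    simp only
    rw [clT_eq hs]
    congr 1
    funext y
    show f y * ψ ((F.Φ (T - s) y : ℝ)) T = masterχ F T ψ f (T - s) T y
    rw [masterχ, max_eq_left h1, hclTT]
  have hCeq : ∀ s ∈ Set.Icc (0:ℝ) T,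
      pairSM (Ff f (μ s)) (fun x => ψ (x : ℝ) s) = Cm s := by
    intro s hs
    rw [pairSM_Ff f _ hBMf (hBMψf s hs)]
    rw [hCm]
    simp only
    rw [clT_eq hs]
    congr 1
    funext y
    show f y * ψ ((y : ℝ)) s = masterχ F T ψ f 0 s y
    rw [masterχ, max_self, F.init, clT_eq hs]
  have hBeq : ∀ t ∈ Set.Icc (0:ℝ) T,
      pairSM (μ t) (fun x => ψt (x : ℝ) t + ψx (x : ℝ) t * F.v x) = Bm t := by
    intro t ht
    rw [hBm]
    simp only
    rw [clT_eq ht]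
    congr 1
    funext y
    show ψt ((y:ℝ)) t + ψx ((y:ℝ)) t * F.v y = masterχ F T Wθ (fun _ => (1:ℝ)) 0 t y
    rw [masterχ, max_self, F.init, clT_eq ht, one_mul, hWθ]
    simp only
    rw [Set.projIcc_val]
  have hHeq : ∀ s t : ℝ, 0 ≤ s → s ≤ t → t ≤ T →
      pairSM ((Ff f (μ s)).map (F.Φ (t - s)))
        (fun x : I01 => ψt (x : ℝ) t + ψx (x : ℝ) t * F.v x) = Hm s t := by
    intro s t hs0 hst htT
    have htmem : t ∈ Set.Icc (0:ℝ) T := ⟨hs0.trans hst, htT⟩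
    have h1 : (0:ℝ) ≤ t - s := by linarith
    rw [pairSM_map _ (hΦmeas _ h1) (hBMW t htmem),
      pairSM_Ff f _ hBMf (hBMcomp (hBMW t htmem) _ h1)]
    rw [hHmdef]
    simp only
    rw [clT_eq ⟨hs0, hst.trans htT⟩]
    congr 1
    funext y
    show f y * (ψt ((F.Φ (t - s) y : ℝ)) t + ψx ((F.Φ (t - s) y : ℝ)) t * F.v (F.Φ (t - s) y)) =
      masterχ F T Wθ f (t - s) t y
    rw [masterχ, max_eq_left h1, clT_eq htmem, hWθ]
    simp only
    rw [Set.projIcc_val]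
  -- the four main identities
  have hVOC_T := hVOC T hTmem (fun x => ψ (x : ℝ) T) (hψfc T hTmem)
  have hchar0 := char_FTC_measure F hψ hψx hψt hbc hv ν₀ h0mem
  simp only [sub_zero] at hchar0
  have hchar : ∀ s ∈ Set.Icc (0:ℝ) T,
      pairSM ((Ff f (μ s)).map (F.Φ (T - s))) (fun x => ψ (x : ℝ) T) -
        pairSM (Ff f (μ s)) (fun x => ψ (x : ℝ) s) =
      ∫ t in s..T, pairSM ((Ff f (μ s)).map (F.Φ (t - s)))
        (fun x : I01 => ψt (x : ℝ) t + ψx (x : ℝ) t * F.v x) :=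
    fun s hs => char_FTC_measure F hψ hψx hψt hbc hv (Ff f (μ s)) hs
  have hVOC_W : ∀ t ∈ Set.Icc (0:ℝ) T,
      pairSM (μ t) (fun x : I01 => ψt (x : ℝ) t + ψx (x : ℝ) t * F.v x) =
        pairSM (ν₀.map (F.Φ t)) (fun x : I01 => ψt (x : ℝ) t + ψx (x : ℝ) t * F.v x) +
        ∫ s in (0:ℝ)..t, pairSM ((Ff f (μ s)).map (F.Φ (t - s)))
          (fun x : I01 => ψt (x : ℝ) t + ψx (x : ℝ) t * F.v x) :=
    fun t ht => hVOC t ht _ (hWc t ht)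
  -- decompositions
  have hEmdecomp : ∀ s ∈ Set.Icc (0:ℝ) T, Em s = Cm s + G'm s := by
    intro s hs
    have h3 := hchar s hs
    rw [hEeq s hs, hCeq s hs] at h3
    have h4 : (∫ t in s..T, pairSM ((Ff f (μ s)).map (F.Φ (t - s)))
        (fun x : I01 => ψt (x : ℝ) t + ψx (x : ℝ) t * F.v x)) = ∫ t in s..T, Hm s t := by
      refine intervalIntegral.integral_congr (fun t ht => ?_)
      rw [Set.uIcc_of_le hs.2] at ht
      exact hHeq s t hs.1 ht.1 ht.2
    rw [h4, ← hG'meq s hs] at h3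
    linarith
  have hAdecomp : ∀ t ∈ Set.Icc (0:ℝ) T,
      pairSM (ν₀.map (F.Φ t)) (fun x : I01 => ψt (x : ℝ) t + ψx (x : ℝ) t * F.v x) =
        Bm t - Gm t := by
    intro t ht
    have h4 := hVOC_W t ht
    have h5 : (∫ s in (0:ℝ)..t, pairSM ((Ff f (μ s)).map (F.Φ (t - s)))
        (fun x : I01 => ψt (x : ℝ) t + ψx (x : ℝ) t * F.v x)) = Gm t := by
      rw [hGmeq t ht]
      refine intervalIntegral.integral_congr (fun s hs => ?_)
      rw [Set.uIcc_of_le ht.1] at hs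
      exact hHeq s t hs.1 hs.2 ht.2
    rw [h5, hBeq t ht] at h4
    linarith
  -- integral-level identities
  have hIE : (∫ s in (0:ℝ)..T, pairSM ((Ff f (μ s)).map (F.Φ (T - s)))
      (fun x => ψ (x : ℝ) T)) = ∫ s in (0:ℝ)..T, Em s := by
    refine intervalIntegral.integral_congr (fun s hs => ?_)
    rw [Set.uIcc_of_le hT0] at hs
    exact hEeq s hs
  have hIEm : (∫ s in (0:ℝ)..T, Em s) =
      (∫ s in (0:ℝ)..T, Cm s) + ∫ s in (0:ℝ)..T, G'm s := by
    rw [← intervalIntegral.integral_add hCmint hG'mint]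
    refine intervalIntegral.integral_congr (fun s hs => ?_)
    rw [Set.uIcc_of_le hT0] at hs
    exact hEmdecomp s hs
  have hIA : (∫ t in (0:ℝ)..T, pairSM (ν₀.map (F.Φ t))
      (fun x : I01 => ψt (x : ℝ) t + ψx (x : ℝ) t * F.v x)) =
      (∫ t in (0:ℝ)..T, Bm t) - ∫ t in (0:ℝ)..T, Gm t := by
    rw [← intervalIntegral.integral_sub hBmint hGmint]
    refine intervalIntegral.integral_congr (fun t ht => ?_)
    rw [Set.uIcc_of_le hT0] at ht
    exact hAdecomp t ht
  have hIB : (∫ t in (0:ℝ)..T, Bm t) =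
      ∫ t in (0:ℝ)..T, pairSM (μ t) (fun x => ψt (x : ℝ) t + ψx (x : ℝ) t * F.v x) := by
    refine intervalIntegral.integral_congr (fun t ht => ?_)
    rw [Set.uIcc_of_le hT0] at ht
    exact (hBeq t ht).symm
  have hIC : (∫ t in (0:ℝ)..T, Cm t) =
      ∫ t in (0:ℝ)..T, pairSM (Ff f (μ t)) (fun x => ψ (x : ℝ) t) := by
    refine intervalIntegral.integral_congr (fun t ht => ?_)
    rw [Set.uIcc_of_le hT0] at ht
    exact (hCeq t ht).symm
  -- final computation
  rw [hVOC_T]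
  have lhs_eq : pairSM (ν₀.map (F.Φ T)) (fun x => ψ (x : ℝ) T) +
      (∫ s in (0:ℝ)..T, pairSM ((Ff f (μ s)).map (F.Φ (T - s))) (fun x => ψ (x : ℝ) T)) -
      pairSM ν₀ (fun x => ψ (x : ℝ) 0) =
      (pairSM (ν₀.map (F.Φ T)) (fun x => ψ (x : ℝ) T) - pairSM ν₀ (fun x => ψ (x : ℝ) 0)) +
      (∫ s in (0:ℝ)..T, pairSM ((Ff f (μ s)).map (F.Φ (T - s))) (fun x => ψ (x : ℝ) T)) := by
    ring
  rw [lhs_eq, hchar0, hIE, hIEm, hIA, hGswap]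
  rw [hIB, hIC]
  ring

end
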